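/- arXiv:1511.02146 — 3 statements merged into one kernel-verified Lean document; each statement's English description precedes it below -/
import Mathlib

section
/- Let f ∈ L²₀(ℤ_p^n) (so f ∈ L¹(ℚ_p^n), being square-integrable with support in the unit ball) and let f̂(ξ) = ∫_{ℚ_p^n} ψ(ξ·x) f(x) dⁿx be its Fourier transform. Then for every t > 0 the Fourier transform of K(·,t) ∗ f equals 1_{ℚ_p^n∖ℤ_p^n}(ξ) e^{−t A(ξ)} f̂(ξ) for all ξ ∈ ℚ_p^n, this function lies in L¹(ℚ_p^n), and (T(t)f)(x) = ∫_{ℚ_p^n} ψ(−ξ·x) 1_{ℚ_p^n∖ℤ_p^n}(ξ) e^{−t A(ξ)} f̂(ξ) dⁿξ for almost every x. -/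
open MeasureTheory Filter Topology Metric

noncomputable instance qpnMeasurableSpace {p : ℕ} [Fact p.Prime] {n : ℕ} :
    MeasurableSpace (Fin n → ℚ_[p]) := borel _

instance qpnBorelSpace {p : ℕ} [Fact p.Prime] {n : ℕ} :
    BorelSpace (Fin n → ℚ_[p]) := ⟨rfl⟩

namespace PadicHeat

variable {p : ℕ} [Fact p.Prime] {n : ℕ}

/-- The pairing `ξ·x = Σ_j ξ_j x_j` on `ℚ_p^n`. -/
noncomputable def dotQ (ξ x : Fin n → ℚ_[p]) : ℚ_[p] := ∑ j, ξ j * x j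

/-- The heat kernel `K(x,t) = ∫_{ℚ_p^n∖ℤ_p^n} ψ(−x·ξ) e^{−tA(ξ)} dⁿξ`. -/
noncomputable def heatK (μ : Measure (Fin n → ℚ_[p])) (ψ : ℚ_[p] → ℂ)
    (A : (Fin n → ℚ_[p]) → ℝ) (t : ℝ) (x : Fin n → ℚ_[p]) : ℂ :=
  ∫ ξ in {ξ : Fin n → ℚ_[p] | 1 < ‖ξ‖}, ψ (-dotQ x ξ) * (Real.exp (-(t * A ξ)) : ℂ) ∂μ

open Classical in
/-- The semigroup `T(t)`: the identity for `t = 0` and convolution with `K(·,t)` for `t ≠ 0`. -/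
noncomputable def heatT (μ : Measure (Fin n → ℚ_[p])) (ψ : ℚ_[p] → ℂ)
    (A : (Fin n → ℚ_[p]) → ℝ) (t : ℝ) (f : (Fin n → ℚ_[p]) → ℂ)
    (x : Fin n → ℚ_[p]) : ℂ :=
  if t = 0 then f x else ∫ y, heatK μ ψ A t y * f (x - y) ∂μ

/-- The `p`-adic Fourier transform `f̂(ξ) = ∫ ψ(ξ·x) f(x) dⁿx`. -/
noncomputable def fourierQ (μ : Measure (Fin n → ℚ_[p])) (ψ : ℚ_[p] → ℂ)
    (f : (Fin n → ℚ_[p]) → ℂ) (ξ : Fin n → ℚ_[p]) : ℂ :=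
  ∫ x, ψ (dotQ ξ x) * f x ∂μ

/-- The pseudodifferential operator `A_β`, `(A_β f)(x) = ∫ ψ(−ξ·x) A(ξ) f̂(ξ) dⁿξ`. -/
noncomputable def opA (μ : Measure (Fin n → ℚ_[p])) (ψ : ℚ_[p] → ℂ)
    (A : (Fin n → ℚ_[p]) → ℝ) (f : (Fin n → ℚ_[p]) → ℂ) (x : Fin n → ℚ_[p]) : ℂ :=
  ∫ ξ, ψ (-dotQ ξ x) * (A ξ : ℂ) * fourierQ μ ψ f ξ ∂μ

/-- Membership in the Lizorkin space `𝓛₀(ℤ_p^n)`: locally constant, supported in the unit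
ball, with zero mean. -/
def MemL0 (μ : Measure (Fin n → ℚ_[p])) (f : (Fin n → ℚ_[p]) → ℂ) : Prop :=
  IsLocallyConstant f ∧ (∀ x : Fin n → ℚ_[p], 1 < ‖x‖ → f x = 0) ∧ (∫ x, f x ∂μ) = 0

/-- Membership in `L²₀(ℤ_p^n)`: square integrable, vanishing (a.e.) outside the unit ball,
with zero mean. -/
def MemL20 (μ : Measure (Fin n → ℚ_[p])) (f : (Fin n → ℚ_[p]) → ℂ) : Prop :=
  MemLp f 2 μ ∧ (∀ᵐ x ∂μ, 1 < ‖x‖ → f x = 0) ∧ (∫ x, f x ∂μ) = 0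

/-- The wavelet `ω_{γbk}(x) = p^{−nγ/2} ψ(p^{−1} k·(p^γ x − b)) Ω(‖p^γ x − b‖_p)`. -/
noncomputable def omegaFn (ψ : ℚ_[p] → ℂ) (γ : ℤ) (b : Fin n → ℚ_[p]) (k : Fin n → ℕ)
    (x : Fin n → ℚ_[p]) : ℂ :=
  ((p : ℝ) ^ (-((n : ℝ) * (γ : ℝ)) / 2) : ℝ) *
    ψ ((p : ℚ_[p])⁻¹ * ∑ j, (k j : ℚ_[p]) * ((p : ℚ_[p]) ^ γ * x j - b j)) *
    (if ‖(fun j => (p : ℚ_[p]) ^ γ * x j - b j : Fin n → ℚ_[p])‖ ≤ 1 then 1 else 0)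

end PadicHeat

namespace PadicHeatAux

open PadicHeat Metric

variable {p : ℕ} [Fact p.Prime] {n : ℕ}

theorem pnorm_add_le_max (x y : Fin n → ℚ_[p]) : ‖x + y‖ ≤ max ‖x‖ ‖y‖ := by
  refine (pi_norm_le_iff_of_nonneg (le_max_of_le_left (norm_nonneg x))).2 fun i => ?_
  exact le_trans (Padic.nonarchimedean _ _)
    (max_le_max (norm_le_pi_norm x i) (norm_le_pi_norm y i))

theorem pnorm_add_eq {x e : Fin n → ℚ_[p]} (hx : 1 < ‖x‖) (he : ‖e‖ ≤ 1) :
    ‖x + e‖ = ‖x‖ := by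
  refine le_antisymm ((pnorm_add_le_max x e).trans (max_le le_rfl (he.trans hx.le))) ?_
  have h2 : ‖x‖ ≤ max ‖x + e‖ ‖e‖ := by
    simpa using pnorm_add_le_max (x + e) (-e)
  rcases max_cases ‖x + e‖ ‖e‖ with ⟨h, _⟩ | ⟨h, _⟩
  · rwa [h] at h2
  · rw [h] at h2; exact absurd (lt_of_lt_of_le hx (h2.trans he)) (lt_irrefl _)

theorem padic_le_of_one_lt {q : ℚ_[p]} (h : 1 < ‖q‖) : (p : ℝ) ≤ ‖q‖ := by
  have hq : q ≠ 0 := by rintro rfl; simp at h; linarith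
  have hp1 : (1:ℝ) < p := by exact_mod_cast (Fact.out : p.Prime).one_lt
  rw [Padic.norm_eq_zpow_neg_valuation hq] at h ⊢
  have hv : 1 ≤ -q.valuation := by
    by_contra hv
    push_neg at hv
    have hv' : -q.valuation ≤ 0 := by omega
    have : (p:ℝ) ^ (-q.valuation) ≤ (p:ℝ) ^ (0:ℤ) := zpow_le_zpow_right₀ hp1.le hv'
    rw [zpow_neg] at h
    exact absurd (h.trans_le (by simpa using this)) (by simp)
  calc (p:ℝ) = (p:ℝ) ^ (1:ℤ) := (zpow_one _).symm
  _ ≤ _ := zpow_le_zpow_right₀ hp1.le hv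

theorem pnorm_cases (x : Fin n → ℚ_[p]) : ‖x‖ = 0 ∨ ∃ m : ℤ, ‖x‖ = (p:ℝ) ^ m := by
  rcases isEmpty_or_nonempty (Fin n) with h | h
  · left
    have : x = 0 := Subsingleton.elim _ _
    rw [this, norm_zero]
  · have hne : (Finset.univ : Finset (Fin n)).Nonempty := Finset.univ_nonempty
    obtain ⟨j, -, hj⟩ := Finset.exists_mem_eq_sup Finset.univ hne (fun b => ‖x b‖₊)
    have hxj : ‖x‖ = ‖x j‖ := by
      have : ‖x‖₊ = ‖x j‖₊ := by rw [Pi.nnnorm_def, hj]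
      exact congrArg (fun r : NNReal => (r : ℝ)) this
    by_cases hx : x j = 0
    · left; rw [hxj, hx, norm_zero]
    · right
      exact ⟨-(x j).valuation, by rw [hxj, Padic.norm_eq_zpow_neg_valuation hx]⟩

theorem measurable_of_norm_comp (g : ℝ → ℝ) :
    Measurable (fun x : Fin n → ℚ_[p] => g ‖x‖) := by
  intro s _
  have hset : (fun x : Fin n → ℚ_[p] => g ‖x‖) ⁻¹' s
      = ⋃ v ∈ {v : ℝ | v ∈ g ⁻¹' s ∧ (v = 0 ∨ ∃ m : ℤ, v = (p:ℝ) ^ m)},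
          {x : Fin n → ℚ_[p] | ‖x‖ = v} := by
    ext x
    simp only [Set.mem_preimage, Set.mem_iUnion, Set.mem_setOf_eq]
    constructor
    · intro hx
      exact ⟨‖x‖, ⟨hx, pnorm_cases x⟩, rfl⟩
    · rintro ⟨v, ⟨hv, _⟩, rfl⟩
      exact hv
  rw [hset]
  refine MeasurableSet.biUnion ?_ fun v _ => ?_
  · have hsub : {v : ℝ | v ∈ g ⁻¹' s ∧ (v = 0 ∨ ∃ m : ℤ, v = (p:ℝ) ^ m)}
        ⊆ insert (0:ℝ) (Set.range fun m : ℤ => (p:ℝ) ^ m) := by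
      rintro v ⟨-, h⟩
      rcases h with rfl | ⟨m, rfl⟩
      · exact Set.mem_insert _ _
      · exact Set.mem_insert_of_mem _ ⟨m, rfl⟩
    exact ((Set.countable_range _).insert 0).mono hsub
  · exact continuous_norm.measurable (measurableSet_singleton v)


theorem dotQ_comm (x y : Fin n → ℚ_[p]) : dotQ x y = dotQ y x :=
  Finset.sum_congr rfl fun j _ => mul_comm _ _

theorem dotQ_add_right (x y z : Fin n → ℚ_[p]) : dotQ x (y + z) = dotQ x y + dotQ x z := by
  simp [dotQ, mul_add, Finset.sum_add_distrib]

theorem dotQ_sub_left (x y z : Fin n → ℚ_[p]) : dotQ (x - y) z = dotQ x z - dotQ y z := by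
  simp [dotQ, sub_mul, Finset.sum_sub_distrib]

theorem dotQ_neg_right (x y : Fin n → ℚ_[p]) : dotQ x (-y) = -dotQ x y := by
  simp [dotQ]

theorem dotQ_neg_left (x y : Fin n → ℚ_[p]) : dotQ (-x) y = -dotQ x y := by
  simp [dotQ]

theorem continuous_dotQ :
    Continuous (fun q : (Fin n → ℚ_[p]) × (Fin n → ℚ_[p]) => dotQ q.1 q.2) := by
  unfold dotQ
  exact continuous_finset_sum _ fun j _ =>
    ((continuous_apply j).comp continuous_fst).mul ((continuous_apply j).comp continuous_snd)

theorem dotQ_norm_le {x y : Fin n → ℚ_[p]} (hx : ‖x‖ ≤ 1) (hy : ‖y‖ ≤ 1) :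
    ‖dotQ x y‖ ≤ 1 := by
  refine (IsUltrametricDist.norm_sum_le_of_forall_le_of_nonneg zero_le_one ?_ :
    ‖∑ j, x j * y j‖ ≤ 1)
  intro j _
  rw [norm_mul]
  exact mul_le_one₀ ((norm_le_pi_norm x j).trans hx) (norm_nonneg _)
    ((norm_le_pi_norm y j).trans hy)


/-- Choice of a unit-ball vector on which the character paired with `x` is nontrivial. -/
theorem exists_char_ne_one (ψ : ℚ_[p] → ℂ)
    (hψnontriv : ∃ a : ℚ_[p], ‖a‖ ≤ p ∧ ψ a ≠ 1)
    {x : Fin n → ℚ_[p]} (hx : 1 < ‖x‖) :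
    ∃ e : Fin n → ℚ_[p], ‖e‖ ≤ 1 ∧ ψ (dotQ x e) ≠ 1 := by
  obtain ⟨a, ha, hane⟩ := hψnontriv
  -- find a coordinate with big norm
  have hj : ∃ j, 1 < ‖x j‖ := by
    by_contra hc
    push_neg at hc
    exact absurd ((pi_norm_le_iff_of_nonneg zero_le_one).2 hc) (not_le.2 hx)
  obtain ⟨j, hj⟩ := hj
  have hxj0 : x j ≠ 0 := by
    intro h0; rw [h0, norm_zero] at hj; linarith
  have hpxj : (p : ℝ) ≤ ‖x j‖ := padic_le_of_one_lt hj
  refine ⟨fun i => if i = j then a / x j else 0, ?_, ?_⟩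
  · refine (pi_norm_le_iff_of_nonneg zero_le_one).2 fun i => ?_
    by_cases hi : i = j
    · subst hi
      rw [if_pos rfl, norm_div]
      exact div_le_one_of_le₀ (ha.trans hpxj) (norm_nonneg _)
    · simp [hi]
  · have : dotQ x (fun i => if i = j then a / x j else 0) = a := by
      unfold dotQ
      rw [Finset.sum_eq_single j]
      · simp [mul_div_cancel₀ _ hxj0]
      · intro i _ hi; simp [hi]
      · intro h; exact absurd (Finset.mem_univ j) h
    rw [this]; exact hane

/-- Translation invariance of a set integral over an invariant set. -/
theorem setIntegral_add_right (μ : Measure (Fin n → ℚ_[p])) [μ.IsAddHaarMeasure]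
    (U : Set (Fin n → ℚ_[p])) (e : Fin n → ℚ_[p])
    (hU : (fun y => y + e) ⁻¹' U = U) (h : (Fin n → ℚ_[p]) → ℂ) :
    ∫ y in U, h (y + e) ∂μ = ∫ y in U, h y ∂μ := by
  have := (measurePreserving_add_right μ e).setIntegral_preimage_emb
    (MeasurableEquiv.addRight e).measurableEmbedding h U
  rwa [hU] at this

theorem ball_add_invariant {e : Fin n → ℚ_[p]} (he : ‖e‖ ≤ 1) :
    (fun y : Fin n → ℚ_[p] => y + e) ⁻¹' closedBall 0 1 = closedBall 0 1 := by
  ext y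
  simp only [Set.mem_preimage, mem_closedBall_zero_iff]
  constructor
  · intro h
    have : ‖y + e + -e‖ ≤ max ‖y + e‖ ‖-e‖ := pnorm_add_le_max _ _
    simpa using this.trans (max_le h (by simpa using he))
  · intro h
    have : ‖y + e‖ ≤ max ‖y‖ ‖e‖ := pnorm_add_le_max _ _
    exact this.trans (max_le h he)

theorem sphere_add_invariant {e : Fin n → ℚ_[p]} (he : ‖e‖ ≤ 1) :
    (fun y : Fin n → ℚ_[p] => y + e) ⁻¹' {ξ : Fin n → ℚ_[p] | 1 < ‖ξ‖}
      = {ξ : Fin n → ℚ_[p] | 1 < ‖ξ‖} := by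
  have hball := Set.ext_iff.1 (ball_add_invariant (n := n) he)
  ext y
  have h2 := hball y
  simp only [Set.mem_preimage, mem_closedBall_zero_iff] at h2
  simp only [Set.mem_preimage, Set.mem_setOf_eq, ← not_le]
  exact not_congr h2


theorem measure_closedBall_one (μ : Measure (Fin n → ℚ_[p])) [μ.IsAddHaarMeasure]
    (v : Fin n → ℚ_[p]) :
    μ (closedBall v 1) = μ (closedBall (0 : Fin n → ℚ_[p]) 1) := by
  have hpre : (fun y => v + y) ⁻¹' (closedBall v 1) = closedBall (0 : Fin n → ℚ_[p]) 1 := by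
    ext y
    simp only [Set.mem_preimage, Metric.mem_closedBall]
    rw [dist_eq_norm, add_sub_cancel_left, dist_zero_right]
  rw [← hpre, measure_preimage_add]

theorem measure_closedBall_le (μ : Measure (Fin n → ℚ_[p])) [μ.IsAddHaarMeasure]
    (hμ : μ (closedBall (0 : Fin n → ℚ_[p]) 1) = 1) (m : ℕ) :
    μ (closedBall (0 : Fin n → ℚ_[p]) ((p:ℝ)^m)) ≤ ((p ^ (m * n) : ℕ) : ENNReal) := by
  classical
  have hp : p.Prime := Fact.out
  have hp0 : (p : ℚ_[p]) ≠ 0 := by exact_mod_cast hp.ne_zero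
  set Fm : Finset ℚ_[p] :=
    (Finset.range (p ^ m)).image (fun k : ℕ => (k : ℚ_[p]) * (p : ℚ_[p]) ^ (-(m:ℤ))) with hFm
  set Rm : Finset (Fin n → ℚ_[p]) := Fintype.piFinset (fun _ => Fm) with hRm
  have hcover : closedBall (0 : Fin n → ℚ_[p]) ((p:ℝ)^m) ⊆ ⋃ v ∈ Rm, closedBall v 1 := by
    intro x hx
    rw [mem_closedBall_zero_iff] at hx
    -- coordinatewise approximation
    have hz : ∀ j, ‖x j * (p : ℚ_[p]) ^ (m:ℤ)‖ ≤ 1 := by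
      intro j
      rw [norm_mul, Padic.norm_p_zpow]
      calc ‖x j‖ * (p:ℝ) ^ (-(m:ℤ))
          ≤ (p:ℝ)^m * (p:ℝ) ^ (-(m:ℤ)) := by
            refine mul_le_mul_of_nonneg_right ((norm_le_pi_norm x j).trans hx) ?_
            positivity
        _ = 1 := by
            rw [← zpow_natCast (p:ℝ) m, ← zpow_add₀ (by exact_mod_cast hp.pos.ne' : (p:ℝ) ≠ 0)]
            simp
    set z : Fin n → ℤ_[p] := fun j => ⟨x j * (p : ℚ_[p]) ^ (m:ℤ), hz j⟩ with hzdef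
    set v : Fin n → ℚ_[p] := fun j => (((z j).appr m : ℚ_[p]) * (p : ℚ_[p]) ^ (-(m:ℤ))) with hvdef
    have hvRm : v ∈ Rm := by
      rw [hRm, Fintype.mem_piFinset]
      intro j
      rw [hFm, Finset.mem_image]
      exact ⟨(z j).appr m, Finset.mem_range.2 ((z j).appr_lt m), rfl⟩
    refine Set.mem_biUnion hvRm ?_
    rw [Metric.mem_closedBall, dist_eq_norm]
    refine (pi_norm_le_iff_of_nonneg zero_le_one).2 fun j => ?_
    have happr : ‖(z j : ℚ_[p]) - ((z j).appr m : ℚ_[p])‖ ≤ (p:ℝ) ^ (-(m:ℤ)) := by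
      have hmem := PadicInt.appr_spec m (z j)
      have := (PadicInt.norm_le_pow_iff_mem_span_pow (z j - ((z j).appr m : ℤ_[p])) m).2 hmem
      rw [← PadicInt.padic_norm_e_of_padicInt] at this
      push_cast at this
      exact this
    have hxv : (x - v) j = ((z j : ℚ_[p]) - ((z j).appr m : ℚ_[p])) * (p : ℚ_[p]) ^ (-(m:ℤ)) := by
      have hxj : x j = (z j : ℚ_[p]) * (p : ℚ_[p]) ^ (-(m:ℤ)) := by
        show x j = (x j * (p : ℚ_[p]) ^ (m:ℤ)) * (p : ℚ_[p]) ^ (-(m:ℤ))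
        rw [mul_assoc, ← zpow_add₀ hp0, add_neg_cancel, zpow_zero, mul_one]
      rw [Pi.sub_apply, hxj, sub_mul]
    rw [hxv, norm_mul, Padic.norm_p_zpow]
    calc ‖(z j : ℚ_[p]) - ((z j).appr m : ℚ_[p])‖ * (p:ℝ) ^ (-(-(m:ℤ)))
        ≤ (p:ℝ) ^ (-(m:ℤ)) * (p:ℝ) ^ ((m:ℤ)) := by
          rw [neg_neg]
          refine mul_le_mul_of_nonneg_right happr ?_
          positivity
      _ = 1 := by
          rw [← zpow_add₀ (by exact_mod_cast hp.pos.ne' : (p:ℝ) ≠ 0)]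
          simp
  calc μ (closedBall (0 : Fin n → ℚ_[p]) ((p:ℝ)^m))
      ≤ μ (⋃ v ∈ Rm, closedBall v 1) := measure_mono hcover
    _ ≤ ∑ v ∈ Rm, μ (closedBall v 1) := measure_biUnion_finset_le Rm _
    _ = ∑ v ∈ Rm, 1 := by
        refine Finset.sum_congr rfl fun v _ => ?_
        rw [measure_closedBall_one μ v, hμ]
    _ = (Rm.card : ENNReal) := by simp
    _ ≤ ((p ^ (m * n) : ℕ) : ENNReal) := by
        have hcard : Rm.card ≤ p ^ (m * n) := by
          rw [hRm, Fintype.card_piFinset]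
          calc ∏ _j : Fin n, Fm.card ≤ ∏ _j : Fin n, p ^ m :=
              Finset.prod_le_prod' fun j _ => (Finset.card_image_le.trans (by simp))
            _ = p ^ (m * n) := by
              rw [Finset.prod_const]
              simp [pow_mul]
        exact_mod_cast Nat.cast_le.2 hcard
  

/-- Summability of the dominating series. -/
theorem summable_dom (β C₀ t : ℝ) (hβ : 0 < β) (hC₀ : 0 < C₀) (ht : 0 < t) :
    Summable (fun m : ℕ =>
      Real.exp (-(t * (C₀ * ((p:ℝ) ^ m) ^ β))) * (p:ℝ) ^ ((m + 1) * n)) := by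
  have hp : p.Prime := Fact.out
  have hp1 : (1:ℝ) < p := by exact_mod_cast hp.one_lt
  set a : ℕ → ℝ := fun m => Real.exp (-(t * (C₀ * ((p:ℝ) ^ m) ^ β))) * (p:ℝ) ^ ((m + 1) * n)
    with ha
  have ha_nonneg : ∀ m, 0 ≤ a m := fun m => by positivity
  -- the quantity q m := ((p:ℝ)^m)^β tends to infinity
  have hq_tendsto : Tendsto (fun m : ℕ => ((p:ℝ) ^ m) ^ β) atTop atTop := by
    exact (tendsto_rpow_atTop hβ).comp (tendsto_pow_atTop_atTop_of_one_lt hp1)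
  have hpβ : (1:ℝ) < (p:ℝ) ^ β := Real.one_lt_rpow_iff_of_pos (by linarith) |>.2 (Or.inl ⟨hp1, hβ⟩)
  -- the ratio tends to 0
  have hratio : Tendsto
      (fun m : ℕ => (p:ℝ) ^ n * Real.exp (-(t * C₀ * (((p:ℝ)^β - 1) * ((p:ℝ) ^ m) ^ β))))
      atTop (nhds 0) := by
    rw [show (0:ℝ) = (p:ℝ)^n * 0 by ring]
    refine Tendsto.const_mul _ ?_
    refine Real.tendsto_exp_atBot.comp ?_
    have h1 : Tendsto (fun m : ℕ => ((p:ℝ)^β - 1) * ((p:ℝ) ^ m) ^ β) atTop atTop :=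
      Tendsto.const_mul_atTop (by linarith) hq_tendsto
    have h2 := Tendsto.const_mul_atTop_of_neg
      (show -(t * C₀) < 0 by nlinarith) h1
    simpa [neg_mul, mul_assoc] using h2
  have hev : ∀ᶠ m in atTop,
      (p:ℝ) ^ n * Real.exp (-(t * C₀ * (((p:ℝ)^β - 1) * ((p:ℝ) ^ m) ^ β))) ≤ 1/2 := by
    exact hratio.eventually_le_const (by norm_num)
  refine summable_of_ratio_norm_eventually_le (r := 1/2) (by norm_num) ?_
  filter_upwards [hev] with m hm
  have key : a (m + 1)
      = a m * ((p:ℝ) ^ n * Real.exp (-(t * C₀ * (((p:ℝ)^β - 1) * ((p:ℝ) ^ m) ^ β)))) := by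
    rw [ha]
    simp only
    rw [show ((p:ℝ) ^ (m+1)) = (p:ℝ)^m * (p:ℝ) by ring]
    rw [Real.mul_rpow (by positivity) (by positivity)]
    have hexp : Real.exp (-(t * (C₀ * (((p:ℝ) ^ m) ^ β * (p:ℝ) ^ β))))
        = Real.exp (-(t * (C₀ * ((p:ℝ) ^ m) ^ β)))
          * Real.exp (-(t * C₀ * (((p:ℝ) ^ β - 1) * ((p:ℝ) ^ m) ^ β))) := by
      rw [← Real.exp_add]; congr 1; ring
    rw [hexp, show (m + 1 + 1) * n = (m + 1) * n + n by ring, pow_add]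
    ring
  rw [Real.norm_of_nonneg (ha_nonneg _), Real.norm_of_nonneg (ha_nonneg _), key]
  calc a m * ((p:ℝ) ^ n * Real.exp (-(t * C₀ * (((p:ℝ)^β - 1) * ((p:ℝ) ^ m) ^ β))))
      ≤ a m * (1/2) := by
        refine mul_le_mul_of_nonneg_left hm (ha_nonneg m)
    _ = 1/2 * a m := by ring

/-- Integrability of the truncated heat multiplier. -/
theorem integrable_multiplier (μ : Measure (Fin n → ℚ_[p])) [μ.IsAddHaarMeasure]
    (hμ : μ (closedBall (0 : Fin n → ℚ_[p]) 1) = 1)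
    (A : (Fin n → ℚ_[p]) → ℝ) (hA : Measurable A)
    (β C₀ : ℝ) (hβ : 0 < β) (hC₀ : 0 < C₀)
    (hlow : ∀ ξ : Fin n → ℚ_[p], C₀ * ‖ξ‖ ^ β ≤ A ξ)
    (t : ℝ) (ht : 0 < t) :
    Integrable ({ξ : Fin n → ℚ_[p] | 1 < ‖ξ‖}.indicator
      fun η => Real.exp (-(t * A η))) μ := by
  have hp : p.Prime := Fact.out
  have hp1 : (1:ℝ) < p := by exact_mod_cast hp.one_lt
  have hS : MeasurableSet {ξ : Fin n → ℚ_[p] | 1 < ‖ξ‖} := by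
    have : {ξ : Fin n → ℚ_[p] | 1 < ‖ξ‖} = (fun ξ : Fin n → ℚ_[p] => ‖ξ‖) ⁻¹' (Set.Ioi 1) :=
      rfl
    rw [this]
    exact continuous_norm.measurable measurableSet_Ioi
  have hmeas : Measurable ({ξ : Fin n → ℚ_[p] | 1 < ‖ξ‖}.indicator
      fun η => Real.exp (-(t * A η))) :=
    ((Real.measurable_exp.comp ((measurable_const.mul hA).neg))).indicator hS
  refine ⟨hmeas.aestronglyMeasurable, ?_⟩
  rw [hasFiniteIntegral_iff_ofReal (Filter.Eventually.of_forall fun x =>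
    Set.indicator_nonneg (fun η _ => (Real.exp_nonneg _)) x)]
  have henorm : ∀ x, ENNReal.ofReal (({ξ : Fin n → ℚ_[p] | 1 < ‖ξ‖}.indicator
      (fun η => Real.exp (-(t * A η)))) x)
      = {ξ : Fin n → ℚ_[p] | 1 < ‖ξ‖}.indicator
          (fun η => ENNReal.ofReal (Real.exp (-(t * A η)))) x := by
    intro x
    by_cases hx : x ∈ {ξ : Fin n → ℚ_[p] | 1 < ‖ξ‖}
    · rw [Set.indicator_of_mem hx, Set.indicator_of_mem hx]
    · rw [Set.indicator_of_notMem hx, Set.indicator_of_notMem hx]; simp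
  simp_rw [henorm]
  rw [lintegral_indicator hS]
  -- the annuli
  set D : ℕ → Set (Fin n → ℚ_[p]) :=
    fun m => {ξ | (p:ℝ) ^ m < ‖ξ‖ ∧ ‖ξ‖ ≤ (p:ℝ) ^ (m+1)} with hD
  have hDmeas : ∀ m, MeasurableSet (D m) := by
    intro m
    have : D m = ((fun ξ : Fin n → ℚ_[p] => ‖ξ‖) ⁻¹' (Set.Ioi ((p:ℝ)^m))) ∩
        ((fun ξ : Fin n → ℚ_[p] => ‖ξ‖) ⁻¹' (Set.Iic ((p:ℝ)^(m+1)))) := rfl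
    rw [this]
    exact (continuous_norm.measurable measurableSet_Ioi).inter
      (continuous_norm.measurable measurableSet_Iic)
  have hcover : {ξ : Fin n → ℚ_[p] | 1 < ‖ξ‖} ⊆ ⋃ m : ℕ, D m := by
    intro ξ hξ
    have h1 : 1 < ‖ξ‖ := hξ
    have hbig : ∃ k : ℕ, ‖ξ‖ ≤ (p:ℝ) ^ (k+1) := by
      obtain ⟨k, hk⟩ := pow_unbounded_of_one_lt ‖ξ‖ hp1
      exact ⟨k, hk.le.trans (pow_le_pow_right₀ hp1.le (Nat.le_succ k))⟩
    have hub : ‖ξ‖ ≤ (p:ℝ) ^ (Nat.find hbig + 1) := Nat.find_spec hbig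
    have hlb : (p:ℝ) ^ (Nat.find hbig) < ‖ξ‖ := by
      rcases Nat.eq_zero_or_pos (Nat.find hbig) with h0 | h0
      · rw [h0]; simpa using h1
      · have hmin := Nat.find_min hbig (m := Nat.find hbig - 1) (by omega)
        push_neg at hmin
        have heq : Nat.find hbig - 1 + 1 = Nat.find hbig := by omega
        rwa [heq] at hmin
    exact Set.mem_iUnion.2 ⟨Nat.find hbig, hlb, hub⟩
  calc ∫⁻ η in {ξ : Fin n → ℚ_[p] | 1 < ‖ξ‖},
        ENNReal.ofReal (Real.exp (-(t * A η))) ∂μ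
      ≤ ∫⁻ η in ⋃ m : ℕ, D m, ENNReal.ofReal (Real.exp (-(t * A η))) ∂μ :=
        lintegral_mono_set hcover
    _ ≤ ∑' m : ℕ, ∫⁻ η in D m, ENNReal.ofReal (Real.exp (-(t * A η))) ∂μ :=
        lintegral_iUnion_le _ _
    _ ≤ ∑' m : ℕ, ENNReal.ofReal
          (Real.exp (-(t * (C₀ * ((p:ℝ) ^ m) ^ β))) * (p:ℝ) ^ ((m + 1) * n)) := by
        refine ENNReal.tsum_le_tsum fun m => ?_
        have hbound : ∀ η ∈ D m, ENNReal.ofReal (Real.exp (-(t * A η)))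
            ≤ ENNReal.ofReal (Real.exp (-(t * (C₀ * ((p:ℝ) ^ m) ^ β)))) := by
          intro η hη
          refine ENNReal.ofReal_le_ofReal (Real.exp_le_exp.2 ?_)
          have h1 : C₀ * ((p:ℝ) ^ m) ^ β ≤ C₀ * ‖η‖ ^ β := by
            refine mul_le_mul_of_nonneg_left
              (Real.rpow_le_rpow (by positivity) hη.1.le hβ.le) hC₀.le
          have h2 := hlow η
          have := h1.trans h2
          nlinarith
        calc ∫⁻ η in D m, ENNReal.ofReal (Real.exp (-(t * A η))) ∂μ
            ≤ ∫⁻ _η in D m,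
                ENNReal.ofReal (Real.exp (-(t * (C₀ * ((p:ℝ) ^ m) ^ β)))) ∂μ :=
              setLIntegral_mono' (hDmeas m) hbound
          _ = ENNReal.ofReal (Real.exp (-(t * (C₀ * ((p:ℝ) ^ m) ^ β)))) * μ (D m) :=
              setLIntegral_const _ _
          _ ≤ ENNReal.ofReal (Real.exp (-(t * (C₀ * ((p:ℝ) ^ m) ^ β))))
                * ((p ^ ((m+1) * n) : ℕ) : ENNReal) := by
              refine mul_le_mul_right ?_ _
              refine le_trans (measure_mono ?_) (measure_closedBall_le μ hμ (m+1))
              intro η hη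
              rw [mem_closedBall_zero_iff]
              exact hη.2
          _ = ENNReal.ofReal
                (Real.exp (-(t * (C₀ * ((p:ℝ) ^ m) ^ β))) * (p:ℝ) ^ ((m + 1) * n)) := by
              rw [ENNReal.ofReal_mul (Real.exp_nonneg _)]
              congr 1
              rw [← ENNReal.ofReal_natCast]
              congr 1
              push_cast
              ring
    _ < ⊤ := by
        rw [← ENNReal.ofReal_tsum_of_nonneg (fun m => by positivity)
          (summable_dom β C₀ t hβ hC₀ ht)]
        exact ENNReal.ofReal_lt_top


theorem measurableSet_bigSphere :
    MeasurableSet {ξ : Fin n → ℚ_[p] | 1 < ‖ξ‖} :=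
  continuous_norm.measurable measurableSet_Ioi

/-- The heat kernel vanishes outside the unit ball. -/
theorem heatK_eq_zero (μ : Measure (Fin n → ℚ_[p])) [μ.IsAddHaarMeasure]
    (ψ : ℚ_[p] → ℂ) (hψadd : ∀ a b : ℚ_[p], ψ (a + b) = ψ a * ψ b)
    (hψnontriv : ∃ a : ℚ_[p], ‖a‖ ≤ p ∧ ψ a ≠ 1)
    (A : (Fin n → ℚ_[p]) → ℝ) (g : ℝ → ℝ) (hrad : ∀ ξ, A ξ = g ‖ξ‖)
    (t : ℝ) {x : Fin n → ℚ_[p]} (hx : 1 < ‖x‖) :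
    heatK μ ψ A t x = 0 := by
  obtain ⟨e0, he0, hne⟩ := exists_char_ne_one ψ hψnontriv hx
  have he : ‖-e0‖ ≤ 1 := by rwa [norm_neg]
  have key : heatK μ ψ A t x = ψ (dotQ x e0) * heatK μ ψ A t x := by
    conv_lhs => rw [heatK,
      ← setIntegral_add_right μ _ (-e0) (sphere_add_invariant he)
        (fun ξ => ψ (-dotQ x ξ) * (Real.exp (-(t * A ξ)) : ℂ))]
    rw [heatK, ← MeasureTheory.integral_const_mul]
    refine setIntegral_congr_fun measurableSet_bigSphere fun ξ hξ => ?_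
    have hA : A (ξ + -e0) = A ξ := by
      rw [hrad, hrad, pnorm_add_eq hξ he]
    have hchar : ψ (-dotQ x (ξ + -e0)) = ψ (dotQ x e0) * ψ (-dotQ x ξ) := by
      rw [dotQ_add_right, dotQ_neg_right, neg_add, neg_neg, add_comm, hψadd]
    simp only [hA, hchar]
    ring
  have : (ψ (dotQ x e0) - 1) * heatK μ ψ A t x = 0 := by
    rw [sub_mul, one_mul, ← key, sub_self]
  rcases mul_eq_zero.1 this with h | h
  · exact absurd (sub_eq_zero.1 h) hne
  · exact h

/-- The character integral over the unit ball. -/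
theorem char_ball_integral (μ : Measure (Fin n → ℚ_[p])) [μ.IsAddHaarMeasure]
    (hμ : μ (closedBall (0 : Fin n → ℚ_[p]) 1) = 1)
    (ψ : ℚ_[p] → ℂ) (hψadd : ∀ a b : ℚ_[p], ψ (a + b) = ψ a * ψ b)
    (hψtriv : ∀ a : ℚ_[p], ‖a‖ ≤ 1 → ψ a = 1)
    (hψnontriv : ∃ a : ℚ_[p], ‖a‖ ≤ p ∧ ψ a ≠ 1)
    (ζ : Fin n → ℚ_[p]) :
    ∫ y in closedBall (0 : Fin n → ℚ_[p]) 1, ψ (dotQ ζ y) ∂μ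
      = if ‖ζ‖ ≤ 1 then 1 else 0 := by
  by_cases hζ : ‖ζ‖ ≤ 1
  · rw [if_pos hζ]
    have : ∫ y in closedBall (0 : Fin n → ℚ_[p]) 1, ψ (dotQ ζ y) ∂μ
        = ∫ _y in closedBall (0 : Fin n → ℚ_[p]) 1, (1:ℂ) ∂μ := by
      refine setIntegral_congr_fun measurableSet_closedBall fun y hy => ?_
      exact hψtriv _ (dotQ_norm_le hζ (mem_closedBall_zero_iff.1 hy))
    rw [this, setIntegral_const, measureReal_def, hμ]
    simp
  · rw [if_neg hζ]
    push_neg at hζ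
    obtain ⟨e, he, hne⟩ := exists_char_ne_one ψ hψnontriv hζ
    have key : ∫ y in closedBall (0 : Fin n → ℚ_[p]) 1, ψ (dotQ ζ y) ∂μ
        = ψ (dotQ ζ e) * ∫ y in closedBall (0 : Fin n → ℚ_[p]) 1, ψ (dotQ ζ y) ∂μ := by
      conv_lhs => rw [← setIntegral_add_right μ _ e (ball_add_invariant he)
        (fun y => ψ (dotQ ζ y))]
      rw [← MeasureTheory.integral_const_mul]
      refine setIntegral_congr_fun measurableSet_closedBall fun y hy => ?_
      rw [dotQ_add_right, hψadd]
      ring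
    have : (ψ (dotQ ζ e) - 1) * ∫ y in closedBall (0 : Fin n → ℚ_[p]) 1, ψ (dotQ ζ y) ∂μ
        = 0 := by
      rw [sub_mul, one_mul, ← key, sub_self]
    rcases mul_eq_zero.1 this with h | h
    · exact absurd (sub_eq_zero.1 h) hne
    · exact h


section Kernel

variable (μ : Measure (Fin n → ℚ_[p])) [μ.IsAddHaarMeasure]
  (ψ : ℚ_[p] → ℂ) (A : (Fin n → ℚ_[p]) → ℝ) (t : ℝ)

/-- Joint strong measurability of the heat kernel integrand. -/
theorem heatK_aesm (hψcont : Continuous ψ) (hA : Measurable A) :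
    AEStronglyMeasurable (heatK μ ψ A t) μ := by
  have hcont : Continuous (fun z : (Fin n → ℚ_[p]) × (Fin n → ℚ_[p]) =>
      ψ (-dotQ z.1 z.2)) := hψcont.comp continuous_dotQ.neg
  have hF : AEStronglyMeasurable
      (fun z : (Fin n → ℚ_[p]) × (Fin n → ℚ_[p]) =>
        ψ (-dotQ z.1 z.2) * (Real.exp (-(t * A z.2)) : ℂ))
      (μ.prod (μ.restrict {ξ : Fin n → ℚ_[p] | 1 < ‖ξ‖})) := by
    refine AEStronglyMeasurable.mul hcont.aestronglyMeasurable ?_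
    refine Measurable.aestronglyMeasurable ?_
    exact Complex.measurable_ofReal.comp
      ((Real.measurable_exp.comp (measurable_const.mul (hA.comp measurable_snd)).neg))
  exact hF.integral_prod_right'

/-- Pointwise bound for the heat kernel. -/
theorem heatK_norm_le (hψnorm : ∀ a : ℚ_[p], ‖ψ a‖ = 1) (x : Fin n → ℚ_[p]) :
    ‖heatK μ ψ A t x‖
      ≤ ∫ ξ in {ξ : Fin n → ℚ_[p] | 1 < ‖ξ‖}, Real.exp (-(t * A ξ)) ∂μ := by
  refine (norm_integral_le_integral_norm _).trans (le_of_eq ?_)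
  refine setIntegral_congr_fun measurableSet_bigSphere fun ξ _ => ?_
  rw [norm_mul, hψnorm, one_mul, Complex.norm_real,
    Real.norm_of_nonneg (Real.exp_nonneg _)]

/-- The heat kernel is integrable. -/
theorem heatK_integrable
    (hμ : μ (closedBall (0 : Fin n → ℚ_[p]) 1) = 1)
    (hψcont : Continuous ψ)
    (hψadd : ∀ a b : ℚ_[p], ψ (a + b) = ψ a * ψ b)
    (hψnorm : ∀ a : ℚ_[p], ‖ψ a‖ = 1)
    (hψnontriv : ∃ a : ℚ_[p], ‖a‖ ≤ p ∧ ψ a ≠ 1)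
    (hA : Measurable A)
    (g : ℝ → ℝ) (hrad : ∀ ξ, A ξ = g ‖ξ‖) :
    Integrable (heatK μ ψ A t) μ := by
  set M := ∫ ξ in {ξ : Fin n → ℚ_[p] | 1 < ‖ξ‖}, Real.exp (-(t * A ξ)) ∂μ with hM
  refine Integrable.mono' (g := (closedBall (0 : Fin n → ℚ_[p]) 1).indicator fun _ => M)
    ?_ (heatK_aesm μ ψ A t hψcont hA) ?_
  · rw [integrable_indicator_iff measurableSet_closedBall]
    refine integrableOn_const ?_
    rw [hμ]; exact ENNReal.one_ne_top
  · refine Filter.Eventually.of_forall fun x => ?_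
    by_cases hx : x ∈ closedBall (0 : Fin n → ℚ_[p]) 1
    · rw [Set.indicator_of_mem hx]
      exact heatK_norm_le μ ψ A t hψnorm x
    · rw [Set.indicator_of_notMem hx]
      rw [mem_closedBall_zero_iff] at hx
      push_neg at hx
      rw [heatK_eq_zero μ ψ hψadd hψnontriv A g hrad t hx, norm_zero]

/-- The Fourier transform of the heat kernel. -/
theorem fourierQ_heatK
    (hμ : μ (closedBall (0 : Fin n → ℚ_[p]) 1) = 1)
    (hψcont : Continuous ψ)
    (hψadd : ∀ a b : ℚ_[p], ψ (a + b) = ψ a * ψ b)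
    (hψnorm : ∀ a : ℚ_[p], ‖ψ a‖ = 1)
    (hψtriv : ∀ a : ℚ_[p], ‖a‖ ≤ 1 → ψ a = 1)
    (hψnontriv : ∃ a : ℚ_[p], ‖a‖ ≤ p ∧ ψ a ≠ 1)
    (hA : Measurable A)
    (g : ℝ → ℝ) (hrad : ∀ ξ, A ξ = g ‖ξ‖)
    (hInt : Integrable ({ξ : Fin n → ℚ_[p] | 1 < ‖ξ‖}.indicator
      fun η => Real.exp (-(t * A η))) μ)
    (ξ : Fin n → ℚ_[p]) :
    ∫ y, ψ (dotQ ξ y) * heatK μ ψ A t y ∂μ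
      = Set.indicator {η : Fin n → ℚ_[p] | 1 < ‖η‖}
          (fun η => (Real.exp (-(t * A η)) : ℂ)) ξ := by
  have hS : MeasurableSet {η : Fin n → ℚ_[p] | 1 < ‖η‖} := measurableSet_bigSphere
  have hzero : ∀ y ∉ closedBall (0 : Fin n → ℚ_[p]) 1,
      ψ (dotQ ξ y) * heatK μ ψ A t y = 0 := by
    intro y hy
    rw [mem_closedBall_zero_iff] at hy
    push_neg at hy
    rw [heatK_eq_zero μ ψ hψadd hψnontriv A g hrad t hy, mul_zero]
  rw [← setIntegral_eq_integral_of_forall_compl_eq_zero hzero]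
  have h1 : ∫ y in closedBall (0 : Fin n → ℚ_[p]) 1, ψ (dotQ ξ y) * heatK μ ψ A t y ∂μ
      = ∫ y in closedBall (0 : Fin n → ℚ_[p]) 1,
          ∫ η in {η : Fin n → ℚ_[p] | 1 < ‖η‖},
            ψ (dotQ (ξ - η) y) * (Real.exp (-(t * A η)) : ℂ) ∂μ ∂μ := by
    refine setIntegral_congr_fun measurableSet_closedBall fun y _ => ?_
    rw [heatK, ← MeasureTheory.integral_const_mul]
    refine setIntegral_congr_fun hS fun η _ => ?_
    have hd : dotQ (ξ - η) y = dotQ ξ y + -dotQ y η := by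
      rw [dotQ_sub_left, dotQ_comm y η]; ring
    rw [hd, hψadd]
    ring
  rw [h1]
  -- Fubini
  have hswap : ∫ y in closedBall (0 : Fin n → ℚ_[p]) 1,
        ∫ η in {η : Fin n → ℚ_[p] | 1 < ‖η‖},
          ψ (dotQ (ξ - η) y) * (Real.exp (-(t * A η)) : ℂ) ∂μ ∂μ
      = ∫ η in {η : Fin n → ℚ_[p] | 1 < ‖η‖},
          ∫ y in closedBall (0 : Fin n → ℚ_[p]) 1,
            ψ (dotQ (ξ - η) y) * (Real.exp (-(t * A η)) : ℂ) ∂μ ∂μ := by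
    refine integral_integral_swap ?_
    have haesm : AEStronglyMeasurable
        (fun z : (Fin n → ℚ_[p]) × (Fin n → ℚ_[p]) =>
          ψ (dotQ (ξ - z.2) z.1) * (Real.exp (-(t * A z.2)) : ℂ))
        ((μ.restrict (closedBall (0 : Fin n → ℚ_[p]) 1)).prod
          (μ.restrict {η : Fin n → ℚ_[p] | 1 < ‖η‖})) := by
      refine AEStronglyMeasurable.mul ?_ ?_
      · exact (hψcont.comp (continuous_dotQ.comp
          ((continuous_const.sub continuous_snd).prodMk continuous_fst))).aestronglyMeasurable
      · exact (Complex.measurable_ofReal.comp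
          ((Real.measurable_exp.comp
            (measurable_const.mul (hA.comp measurable_snd)).neg))).aestronglyMeasurable
    have hbnd : Integrable
        (fun z : (Fin n → ℚ_[p]) × (Fin n → ℚ_[p]) =>
          (1 : ℝ) * Real.exp (-(t * A z.2)))
        ((μ.restrict (closedBall (0 : Fin n → ℚ_[p]) 1)).prod
          (μ.restrict {η : Fin n → ℚ_[p] | 1 < ‖η‖})) := by
      refine Integrable.mul_prod (f := fun _ : Fin n → ℚ_[p] => (1:ℝ))
        (g := fun η : Fin n → ℚ_[p] => Real.exp (-(t * A η))) ?_ ?_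
      · refine integrableOn_const ?_
        rw [hμ]; exact ENNReal.one_ne_top
      · exact (integrable_indicator_iff hS).1 hInt
    refine Integrable.mono' hbnd haesm ?_
    refine Filter.Eventually.of_forall fun z => ?_
    rw [Function.uncurry_def, one_mul]
    simp only
    rw [norm_mul, hψnorm, one_mul, Complex.norm_real]
    exact le_of_eq (Real.norm_of_nonneg (Real.exp_nonneg _))
  rw [hswap]
  have h3 : ∫ η in {η : Fin n → ℚ_[p] | 1 < ‖η‖},
        ∫ y in closedBall (0 : Fin n → ℚ_[p]) 1,
          ψ (dotQ (ξ - η) y) * (Real.exp (-(t * A η)) : ℂ) ∂μ ∂μ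
      = ∫ η in {η : Fin n → ℚ_[p] | 1 < ‖η‖},
          (if ‖ξ - η‖ ≤ 1 then (1:ℂ) else 0) * (Real.exp (-(t * A η)) : ℂ) ∂μ := by
    refine setIntegral_congr_fun hS fun η _ => ?_
    rw [MeasureTheory.integral_mul_const,
      char_ball_integral μ hμ ψ hψadd hψtriv hψnontriv (ξ - η)]
  rw [h3]
  by_cases hξ : ξ ∈ {η : Fin n → ℚ_[p] | 1 < ‖η‖}
  · rw [Set.indicator_of_mem hξ]
    have hξ' : 1 < ‖ξ‖ := hξ
    have hsub : closedBall ξ 1 ⊆ {η : Fin n → ℚ_[p] | 1 < ‖η‖} := by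
      intro η hη
      rw [Metric.mem_closedBall, dist_eq_norm] at hη
      have : ‖ξ + (η - ξ)‖ = ‖ξ‖ := pnorm_add_eq hξ' hη
      rw [add_sub_cancel] at this
      show 1 < ‖η‖
      rw [this]; exact hξ'
    have hcongr : Set.EqOn
        (fun η => (if ‖ξ - η‖ ≤ 1 then (1:ℂ) else 0) * (Real.exp (-(t * A η)) : ℂ))
        ((closedBall ξ 1).indicator fun _ => (Real.exp (-(t * A ξ)) : ℂ))
        {η : Fin n → ℚ_[p] | 1 < ‖η‖} := by
      intro η hη
      by_cases h : ‖ξ - η‖ ≤ 1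
      · have hmem : η ∈ closedBall ξ 1 := by
          rw [Metric.mem_closedBall, dist_eq_norm, norm_sub_rev]
          exact h
        have hnorm : ‖η‖ = ‖ξ‖ := by
          have h' : ‖η - ξ‖ ≤ 1 := by rwa [norm_sub_rev] at h
          have := pnorm_add_eq hξ' h'
          rwa [add_sub_cancel] at this
        have hAeq : A η = A ξ := by rw [hrad, hrad, hnorm]
        simp only [if_pos h, one_mul, Set.indicator_of_mem hmem, hAeq]
      · have hmem : η ∉ closedBall ξ 1 := by
          rw [Metric.mem_closedBall, dist_eq_norm, norm_sub_rev]
          exact h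
        simp only [if_neg h, zero_mul, Set.indicator_of_notMem hmem]
    rw [setIntegral_congr_fun hS hcongr, setIntegral_indicator measurableSet_closedBall,
      Set.inter_eq_self_of_subset_right hsub, setIntegral_const, measureReal_def,
      measure_closedBall_one μ ξ, hμ]
    simp
  · rw [Set.indicator_of_notMem hξ]
    have hξ' : ‖ξ‖ ≤ 1 := by
      simp only [Set.mem_setOf_eq, not_lt] at hξ
      exact hξ
    have hcongr : Set.EqOn
        (fun η => (if ‖ξ - η‖ ≤ 1 then (1:ℂ) else 0) * (Real.exp (-(t * A η)) : ℂ))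
        (fun _ => (0:ℂ)) {η : Fin n → ℚ_[p] | 1 < ‖η‖} := by
      intro η hη
      have h : ¬ (‖ξ - η‖ ≤ 1) := by
        intro hle
        have heq : η = ξ + -(ξ - η) := by abel
        have := (pnorm_add_le_max ξ (-(ξ - η))).trans
          (max_le hξ' (by rwa [norm_neg]))
        rw [← heq] at this
        exact absurd (lt_of_lt_of_le hη this) (lt_irrefl _)
      simp only [if_neg h, zero_mul]
    rw [setIntegral_congr_fun hS hcongr]
    simp

/-- The Fourier transform of an a.e. strongly measurable function is a.e. strongly
measurable. -/
theorem fourierQ_aesm (hψcont : Continuous ψ) {f : (Fin n → ℚ_[p]) → ℂ}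
    (hf : AEStronglyMeasurable f μ) :
    AEStronglyMeasurable (fourierQ μ ψ f) μ := by
  have hF : AEStronglyMeasurable
      (fun z : (Fin n → ℚ_[p]) × (Fin n → ℚ_[p]) => ψ (dotQ z.1 z.2) * f z.2)
      (μ.prod μ) :=
    AEStronglyMeasurable.mul
      (hψcont.comp continuous_dotQ).aestronglyMeasurable hf.comp_snd
  exact hF.integral_prod_right'

/-- Uniform bound for the Fourier transform. -/
theorem fourierQ_norm_le (hψnorm : ∀ a : ℚ_[p], ‖ψ a‖ = 1)
    (f : (Fin n → ℚ_[p]) → ℂ) (ξ : Fin n → ℚ_[p]) :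
    ‖fourierQ μ ψ f ξ‖ ≤ ∫ x, ‖f x‖ ∂μ := by
  refine (norm_integral_le_integral_norm _).trans (le_of_eq ?_)
  simp_rw [norm_mul, hψnorm, one_mul]

end Kernel


end PadicHeatAux

open PadicHeat

/-- For `f ∈ L²₀(ℤ_p^n)` (hence `f ∈ L¹`) and `t > 0`, the Fourier transform of
`K(·,t) ∗ f` equals `1_{ℚ_p^n∖ℤ_p^n}(ξ) e^{−tA(ξ)} f̂(ξ)`, this function is integrable, and
`(T(t)f)(x) = ∫ ψ(−ξ·x) 1_{ℚ_p^n∖ℤ_p^n}(ξ) e^{−tA(ξ)} f̂(ξ) dⁿξ` for almost every `x`. -/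
theorem fourier_transform_of_heat_semigroup {p n : ℕ} [Fact p.Prime] (hn : 0 < n)
    (μ : Measure (Fin n → ℚ_[p])) [μ.IsAddHaarMeasure]
    (hμ : μ (closedBall (0 : Fin n → ℚ_[p]) 1) = 1)
    (β C₀ C₁ : ℝ) (hβ : 0 < β) (hC₀ : 0 < C₀) (hC₁ : 0 < C₁)
    (A : (Fin n → ℚ_[p]) → ℝ) (g : ℝ → ℝ)
    (hrad : ∀ ξ : Fin n → ℚ_[p], A ξ = g ‖ξ‖)
    (hlow : ∀ ξ : Fin n → ℚ_[p], C₀ * ‖ξ‖ ^ β ≤ A ξ)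
    (hupp : ∀ ξ : Fin n → ℚ_[p], A ξ ≤ C₁ * ‖ξ‖ ^ β)
    (ψ : ℚ_[p] → ℂ) (hψcont : Continuous ψ)
    (hψadd : ∀ a b : ℚ_[p], ψ (a + b) = ψ a * ψ b)
    (hψnorm : ∀ a : ℚ_[p], ‖ψ a‖ = 1)
    (hψtriv : ∀ a : ℚ_[p], ‖a‖ ≤ 1 → ψ a = 1)
    (hψnontriv : ∃ a : ℚ_[p], ‖a‖ ≤ p ∧ ψ a ≠ 1)
    (f : (Fin n → ℚ_[p]) → ℂ) (hf : MemL20 μ f)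
    (t : ℝ) (ht : 0 < t) :
    Integrable f μ ∧
    (∀ ξ : Fin n → ℚ_[p],
      fourierQ μ ψ (heatT μ ψ A t f) ξ =
        Set.indicator {η : Fin n → ℚ_[p] | 1 < ‖η‖}
          (fun η => (Real.exp (-(t * A η)) : ℂ) * fourierQ μ ψ f η) ξ) ∧
    Integrable
      (fun ξ : Fin n → ℚ_[p] =>
        Set.indicator {η : Fin n → ℚ_[p] | 1 < ‖η‖}
          (fun η => (Real.exp (-(t * A η)) : ℂ) * fourierQ μ ψ f η) ξ) μ ∧
    (∀ᵐ x ∂μ, heatT μ ψ A t f x =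
      ∫ ξ, ψ (-dotQ ξ x) *
        Set.indicator {η : Fin n → ℚ_[p] | 1 < ‖η‖}
          (fun η => (Real.exp (-(t * A η)) : ℂ) * fourierQ μ ψ f η) ξ ∂μ) := by
  classical
  have hS : MeasurableSet {η : Fin n → ℚ_[p] | 1 < ‖η‖} :=
    PadicHeatAux.measurableSet_bigSphere
  have hA : Measurable A := by
    have hAg : A = fun ξ => g ‖ξ‖ := funext hrad
    rw [hAg]
    exact PadicHeatAux.measurable_of_norm_comp g
  -- Integrability of f
  have hfInt : Integrable f μ := by
    have hB : MeasurableSet (closedBall (0 : Fin n → ℚ_[p]) 1) := measurableSet_closedBall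
    have hae : f =ᵐ[μ] (closedBall (0 : Fin n → ℚ_[p]) 1).indicator f := by
      filter_upwards [hf.2.1] with x hx
      by_cases hx1 : x ∈ closedBall (0 : Fin n → ℚ_[p]) 1
      · rw [Set.indicator_of_mem hx1]
      · rw [Set.indicator_of_notMem hx1]
        rw [mem_closedBall_zero_iff] at hx1
        push_neg at hx1
        exact hx hx1
    rw [integrable_congr hae, integrable_indicator_iff hB]
    haveI : IsFiniteMeasure (μ.restrict (closedBall (0 : Fin n → ℚ_[p]) 1)) := by
      constructor
      rw [Measure.restrict_apply_univ, hμ]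
      exact ENNReal.one_lt_top
    exact MemLp.integrable (by norm_num) (hf.1.restrict _)
  have hInt := PadicHeatAux.integrable_multiplier μ hμ A hA β C₀ hβ hC₀ hlow t ht
  have hKint : Integrable (heatK μ ψ A t) μ :=
    PadicHeatAux.heatK_integrable μ ψ A t hμ hψcont hψadd hψnorm hψnontriv hA g hrad
  have ht0 : t ≠ 0 := ne_of_gt ht
  have hheatT : heatT μ ψ A t f = fun x => ∫ y, heatK μ ψ A t y * f (x - y) ∂μ := by
    funext x
    exact if_neg ht0
  -- bullet 2
  have hbullet2 : ∀ ξ : Fin n → ℚ_[p],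
      fourierQ μ ψ (heatT μ ψ A t f) ξ =
        Set.indicator {η : Fin n → ℚ_[p] | 1 < ‖η‖}
          (fun η => (Real.exp (-(t * A η)) : ℂ) * fourierQ μ ψ f η) ξ := by
    intro ξ
    have hchar_aesm : AEStronglyMeasurable (fun y : Fin n → ℚ_[p] => ψ (dotQ ξ y)) μ :=
      (hψcont.comp (PadicHeatAux.continuous_dotQ.comp
        (continuous_const.prodMk continuous_id))).aestronglyMeasurable
    have hKψ : Integrable (fun y => ψ (dotQ ξ y) * heatK μ ψ A t y) μ :=
      hKint.bdd_mul hchar_aesm (Filter.Eventually.of_forall fun y => le_of_eq (hψnorm _))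
    have hfψ : Integrable (fun y => ψ (dotQ ξ y) * f y) μ :=
      hfInt.bdd_mul hchar_aesm (Filter.Eventually.of_forall fun y => le_of_eq (hψnorm _))
    have hconv : ∀ x, ψ (dotQ ξ x) * heatT μ ψ A t f x
        = convolution (fun y => ψ (dotQ ξ y) * heatK μ ψ A t y)
            (fun y => ψ (dotQ ξ y) * f y) (ContinuousLinearMap.mul ℂ ℂ) μ x := by
      intro x
      rw [hheatT, convolution_def]
      simp only [ContinuousLinearMap.mul_apply']
      rw [← MeasureTheory.integral_const_mul]
      refine integral_congr_ae (Filter.Eventually.of_forall fun y => ?_)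
      have hx : dotQ ξ x = dotQ ξ y + dotQ ξ (x - y) := by
        rw [← PadicHeatAux.dotQ_add_right]
        congr 1
        abel
      rw [hx, hψadd]
      ring
    have hmain : fourierQ μ ψ (heatT μ ψ A t f) ξ
        = (∫ y, ψ (dotQ ξ y) * heatK μ ψ A t y ∂μ) * (∫ y, ψ (dotQ ξ y) * f y ∂μ) := by
      rw [fourierQ]
      rw [integral_congr_ae (Filter.Eventually.of_forall fun x => hconv x)]
      have := integral_convolution (ContinuousLinearMap.mul ℂ ℂ) hKψ hfψ
      simpa using this
    rw [hmain,
      PadicHeatAux.fourierQ_heatK μ ψ A t hμ hψcont hψadd hψnorm hψtriv hψnontriv hA g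
        hrad hInt ξ]
    by_cases hξ : ξ ∈ {η : Fin n → ℚ_[p] | 1 < ‖η‖}
    · rw [Set.indicator_of_mem hξ, Set.indicator_of_mem hξ]
      rfl
    · rw [Set.indicator_of_notMem hξ, Set.indicator_of_notMem hξ, zero_mul]
  -- bullet 3
  have hbullet3 : Integrable
      (fun ξ : Fin n → ℚ_[p] =>
        Set.indicator {η : Fin n → ℚ_[p] | 1 < ‖η‖}
          (fun η => (Real.exp (-(t * A η)) : ℂ) * fourierQ μ ψ f η) ξ) μ := by
    refine Integrable.mono'
      (g := fun ξ => ({η : Fin n → ℚ_[p] | 1 < ‖η‖}.indicator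
        (fun η => Real.exp (-(t * A η))) ξ) * (∫ x, ‖f x‖ ∂μ))
      (hInt.mul_const _) ?_ ?_
    · refine AEStronglyMeasurable.indicator ?_ hS
      exact ((Complex.measurable_ofReal.comp (Real.measurable_exp.comp
        (measurable_const.mul hA).neg)).aestronglyMeasurable).mul
        (PadicHeatAux.fourierQ_aesm μ ψ hψcont hfInt.aestronglyMeasurable)
    · refine Filter.Eventually.of_forall fun ξ => ?_
      by_cases hξ : ξ ∈ {η : Fin n → ℚ_[p] | 1 < ‖η‖}
      · simp only [Set.indicator_of_mem hξ]
        rw [norm_mul, Complex.norm_real, Real.norm_of_nonneg (Real.exp_nonneg _)]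
        exact mul_le_mul_of_nonneg_left
          (PadicHeatAux.fourierQ_norm_le μ ψ hψnorm f ξ) (Real.exp_nonneg _)
      · simp only [Set.indicator_of_notMem hξ]
        rw [norm_zero, zero_mul]
  refine ⟨hfInt, hbullet2, hbullet3, ?_⟩
  -- bullet 4
  refine Filter.Eventually.of_forall fun x => ?_
  have e1 : (fun ξ => ψ (-dotQ ξ x) *
      Set.indicator {η : Fin n → ℚ_[p] | 1 < ‖η‖}
        (fun η => (Real.exp (-(t * A η)) : ℂ) * fourierQ μ ψ f η) ξ)
      = fun ξ => Set.indicator {η : Fin n → ℚ_[p] | 1 < ‖η‖}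
          (fun η => ψ (-dotQ η x) *
            ((Real.exp (-(t * A η)) : ℂ) * fourierQ μ ψ f η)) ξ := by
    funext ξ
    by_cases hξ : ξ ∈ {η : Fin n → ℚ_[p] | 1 < ‖η‖}
    · rw [Set.indicator_of_mem hξ, Set.indicator_of_mem hξ]
    · rw [Set.indicator_of_notMem hξ, Set.indicator_of_notMem hξ, mul_zero]
  rw [e1, integral_indicator hS]
  have e2 : ∫ ξ in {η : Fin n → ℚ_[p] | 1 < ‖η‖},
        ψ (-dotQ ξ x) * ((Real.exp (-(t * A ξ)) : ℂ) * fourierQ μ ψ f ξ) ∂μ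
      = ∫ ξ in {η : Fin n → ℚ_[p] | 1 < ‖η‖},
          ∫ y, (ψ (-dotQ (x - y) ξ) * (Real.exp (-(t * A ξ)) : ℂ)) * f y ∂μ ∂μ := by
    refine setIntegral_congr_fun hS fun ξ _ => ?_
    rw [fourierQ, ← mul_assoc, ← MeasureTheory.integral_const_mul]
    refine integral_congr_ae (Filter.Eventually.of_forall fun y => ?_)
    simp only
    have hc : ψ (-dotQ ξ x) * ψ (dotQ ξ y) = ψ (-dotQ (x - y) ξ) := by
      rw [← hψadd]
      congr 1
      rw [PadicHeatAux.dotQ_sub_left, PadicHeatAux.dotQ_comm x ξ, PadicHeatAux.dotQ_comm y ξ]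
      ring
    rw [← hc]
    ring
  rw [e2]
  have hswap : ∫ ξ in {η : Fin n → ℚ_[p] | 1 < ‖η‖},
        ∫ y, (ψ (-dotQ (x - y) ξ) * (Real.exp (-(t * A ξ)) : ℂ)) * f y ∂μ ∂μ
      = ∫ y, ∫ ξ in {η : Fin n → ℚ_[p] | 1 < ‖η‖},
          (ψ (-dotQ (x - y) ξ) * (Real.exp (-(t * A ξ)) : ℂ)) * f y ∂μ ∂μ := by
    refine integral_integral_swap ?_
    have haesm : AEStronglyMeasurable
        (fun z : (Fin n → ℚ_[p]) × (Fin n → ℚ_[p]) =>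
          (ψ (-dotQ (x - z.2) z.1) * (Real.exp (-(t * A z.1)) : ℂ)) * f z.2)
        ((μ.restrict {η : Fin n → ℚ_[p] | 1 < ‖η‖}).prod μ) := by
      refine AEStronglyMeasurable.mul (AEStronglyMeasurable.mul ?_ ?_) ?_
      · exact (hψcont.comp ((PadicHeatAux.continuous_dotQ.comp
          ((continuous_const.sub continuous_snd).prodMk continuous_fst)).neg)).aestronglyMeasurable
      · exact (Complex.measurable_ofReal.comp
          ((Real.measurable_exp.comp
            (measurable_const.mul (hA.comp measurable_fst)).neg))).aestronglyMeasurable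
      · exact hfInt.aestronglyMeasurable.comp_snd
    have hbnd : Integrable
        (fun z : (Fin n → ℚ_[p]) × (Fin n → ℚ_[p]) =>
          Real.exp (-(t * A z.1)) * ‖f z.2‖)
        ((μ.restrict {η : Fin n → ℚ_[p] | 1 < ‖η‖}).prod μ) :=
      Integrable.mul_prod ((integrable_indicator_iff hS).1 hInt) hfInt.norm
    refine Integrable.mono' hbnd haesm ?_
    refine Filter.Eventually.of_forall fun z => ?_
    rw [Function.uncurry_def]
    simp only
    rw [norm_mul, norm_mul, hψnorm, one_mul, Complex.norm_real,
      Real.norm_of_nonneg (Real.exp_nonneg _)]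
  rw [hswap]
  have e3 : ∫ y, ∫ ξ in {η : Fin n → ℚ_[p] | 1 < ‖η‖},
        (ψ (-dotQ (x - y) ξ) * (Real.exp (-(t * A ξ)) : ℂ)) * f y ∂μ ∂μ
      = ∫ y, heatK μ ψ A t (x - y) * f y ∂μ := by
    refine integral_congr_ae (Filter.Eventually.of_forall fun y => ?_)
    simp only
    rw [MeasureTheory.integral_mul_const]
    rfl
  rw [e3]
  have hcov : ∫ y, heatK μ ψ A t (x - y) * f y ∂μ
      = ∫ y, heatK μ ψ A t y * f (x - y) ∂μ := by
    have hmp := MeasurePreserving.integral_comp (Measure.measurePreserving_sub_left μ x)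
      (MeasurableEquiv.subLeft x).measurableEmbedding
      (fun z => heatK μ ψ A t z * f (x - z))
    rw [← hmp]
    refine integral_congr_ae (Filter.Eventually.of_forall fun y => ?_)
    have : x - (x - y) = y := by abel
    simp only [MeasurableEquiv.subLeft]
    rw [this]
  rw [hcov, hheatT]
end

section
/- For every t > 0, the operator T(t) : L²₀(ℤ_p^n) → L²₀(ℤ_p^n) is compact, self-adjoint (⟨T(t)f, g⟩ = ⟨f, T(t)g⟩ for all f, g ∈ L²₀(ℤ_p^n)), and non-negative (⟨T(t)f, f⟩ ≥ 0 for all f ∈ L²₀(ℤ_p^n)). -/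
open MeasureTheory Filter Topology Metric

open PadicHeat

open MeasureTheory Filter Topology Metric
open scoped ENNReal

namespace PadicHeat

variable {p : ℕ} [Fact p.Prime] {n : ℕ}

namespace Aux

/-- ultrametric bound for pi norm -/
lemma pi_norm_add_le_max (a b : Fin n → ℚ_[p]) : ‖a + b‖ ≤ max ‖a‖ ‖b‖ := by
  refine (pi_norm_le_iff_of_nonneg (le_max_of_le_left (norm_nonneg a))).mpr fun i => ?_
  calc ‖(a + b) i‖ = ‖a i + b i‖ := rfl
    _ ≤ max ‖a i‖ ‖b i‖ := by simpa using Padic.nonarchimedean (a i) (b i)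
    _ ≤ max ‖a‖ ‖b‖ := max_le_max (norm_le_pi_norm a i) (norm_le_pi_norm b i)

lemma pi_norm_add_eq_left {a b : Fin n → ℚ_[p]} (h : ‖b‖ < ‖a‖) : ‖a + b‖ = ‖a‖ := by
  refine le_antisymm ((pi_norm_add_le_max a b).trans (max_le le_rfl h.le)) ?_
  by_contra hlt
  push_neg at hlt
  have h1 : ‖a‖ = ‖(a + b) + (-b)‖ := by congr 1; abel
  have h2 : ‖a‖ ≤ max ‖a + b‖ ‖-b‖ := h1.le.trans (pi_norm_add_le_max _ _)
  rw [norm_neg] at h2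
  exact absurd h2 (not_le.mpr (max_lt hlt h))

lemma dotQ_comm (ξ x : Fin n → ℚ_[p]) : dotQ ξ x = dotQ x ξ := by
  unfold dotQ; exact Finset.sum_congr rfl fun j _ => mul_comm _ _

lemma dotQ_add_left (ξ η x : Fin n → ℚ_[p]) : dotQ (ξ + η) x = dotQ ξ x + dotQ η x := by
  unfold dotQ; rw [← Finset.sum_add_distrib]
  exact Finset.sum_congr rfl fun j _ => by simp [add_mul]

lemma dotQ_sub_left (ξ η x : Fin n → ℚ_[p]) : dotQ (ξ - η) x = dotQ ξ x - dotQ η x := by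
  unfold dotQ; rw [← Finset.sum_sub_distrib]
  exact Finset.sum_congr rfl fun j _ => by simp [sub_mul]

lemma norm_dotQ_le (ξ x : Fin n → ℚ_[p]) : ‖dotQ ξ x‖ ≤ ‖ξ‖ * ‖x‖ := by
  refine IsUltrametricDist.norm_sum_le_of_forall_le_of_nonneg
    (mul_nonneg (norm_nonneg _) (norm_nonneg _)) fun i _ => ?_
  rw [norm_mul]
  exact mul_le_mul (norm_le_pi_norm ξ i) (norm_le_pi_norm x i) (norm_nonneg _) (norm_nonneg _)

lemma continuous_dotQ : Continuous fun z : (Fin n → ℚ_[p]) × (Fin n → ℚ_[p]) => dotQ z.1 z.2 := by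
  unfold dotQ
  exact continuous_finset_sum _ fun j _ =>
    ((continuous_apply j).comp continuous_fst).mul ((continuous_apply j).comp continuous_snd)

section Psi
variable {ψ : ℚ_[p] → ℂ}

lemma psi_zero (hψtriv : ∀ a : ℚ_[p], ‖a‖ ≤ 1 → ψ a = 1) : ψ 0 = 1 :=
  hψtriv 0 (by simp)

lemma psi_mul_neg (hψadd : ∀ a b : ℚ_[p], ψ (a + b) = ψ a * ψ b)
    (hψtriv : ∀ a : ℚ_[p], ‖a‖ ≤ 1 → ψ a = 1) (a : ℚ_[p]) : ψ a * ψ (-a) = 1 := by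
  rw [← hψadd]; simp [psi_zero hψtriv]

lemma conj_psi (hψadd : ∀ a b : ℚ_[p], ψ (a + b) = ψ a * ψ b)
    (hψnorm : ∀ a : ℚ_[p], ‖ψ a‖ = 1)
    (hψtriv : ∀ a : ℚ_[p], ‖a‖ ≤ 1 → ψ a = 1) (a : ℚ_[p]) :
    (starRingEnd ℂ) (ψ a) = ψ (-a) := by
  have h1 := psi_mul_neg hψadd hψtriv a
  have h2 : (starRingEnd ℂ) (ψ a) * ψ a = 1 := by
    rw [mul_comm, Complex.mul_conj]
    have : Complex.normSq (ψ a) = 1 := by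
      rw [Complex.normSq_eq_norm_sq, hψnorm]; norm_num
    rw [this]; norm_num
  calc (starRingEnd ℂ) (ψ a) = (starRingEnd ℂ) (ψ a) * (ψ a * ψ (-a)) := by rw [h1, mul_one]
    _ = ((starRingEnd ℂ) (ψ a) * ψ a) * ψ (-a) := by ring
    _ = ψ (-a) := by rw [h2, one_mul]

end Psi

lemma norm_val_cases (x : Fin n → ℚ_[p]) : ‖x‖ = 0 ∨ ∃ z : ℤ, ‖x‖ = (p : ℝ) ^ z := by
  rcases (Finset.univ : Finset (Fin n)).eq_empty_or_nonempty with h | h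
  · left; rw [Pi.norm_def, h]; simp
  · obtain ⟨j, _, hj⟩ := Finset.exists_mem_eq_sup Finset.univ h fun b => ‖x b‖₊
    have hx : ‖x‖ = ‖x j‖ := by rw [Pi.norm_def, hj]; rfl
    rcases eq_or_ne (x j) 0 with h0 | h0
    · left; rw [hx, h0, norm_zero]
    · right; exact ⟨-(x j).valuation, by rw [hx, Padic.norm_eq_zpow_neg_valuation h0]⟩

lemma exists_norm_coord (x : Fin n → ℚ_[p]) (hx : 0 < ‖x‖) : ∃ j, ‖x‖ = ‖x j‖ := by
  rcases (Finset.univ : Finset (Fin n)).eq_empty_or_nonempty with h | h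
  · exfalso; rw [Pi.norm_def, h] at hx; simp at hx
  · obtain ⟨j, _, hj⟩ := Finset.exists_mem_eq_sup Finset.univ h fun b => ‖x b‖₊
    exact ⟨j, by rw [Pi.norm_def, hj]; rfl⟩

lemma countable_norm_range :
    (Set.range fun x : Fin n → ℚ_[p] => ‖x‖).Countable := by
  have hsub : (Set.range fun x : Fin n → ℚ_[p] => ‖x‖)
      ⊆ insert 0 (Set.range fun z : ℤ => (p : ℝ) ^ z) := by
    rintro r ⟨x, rfl⟩
    rcases norm_val_cases x with h | ⟨z, hz⟩
    · exact Or.inl h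
    · exact Or.inr ⟨z, hz.symm⟩
  exact ((Set.countable_range _).insert 0).mono hsub

lemma measurable_radial_comp (g : ℝ → ℝ) :
    Measurable fun x : Fin n → ℚ_[p] => g ‖x‖ := by
  intro s _
  have heq : (fun x : Fin n → ℚ_[p] => g ‖x‖) ⁻¹' s
      = (fun x : Fin n → ℚ_[p] => ‖x‖) ⁻¹'
        (g ⁻¹' s ∩ Set.range fun x : Fin n → ℚ_[p] => ‖x‖) := by
    ext x
    simp only [Set.mem_preimage, Set.mem_inter_iff, Set.mem_range]
    exact ⟨fun h => ⟨h, ⟨x, rfl⟩⟩, fun h => h.1⟩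
  rw [heq]
  exact measurable_norm (countable_norm_range.mono Set.inter_subset_right).measurableSet

end Aux
end PadicHeat
open MeasureTheory Filter Topology Metric
open scoped ENNReal
namespace PadicHeat
namespace Aux

variable {p : ℕ} [Fact p.Prime] {n : ℕ}

lemma measure_closedBall_le (μ : Measure (Fin n → ℚ_[p])) [μ.IsAddHaarMeasure]
    (hμ : μ (closedBall (0 : Fin n → ℚ_[p]) 1) = 1) (m : ℕ) :
    μ (closedBall (0 : Fin n → ℚ_[p]) ((p : ℝ) ^ m)) ≤ (p : ℝ≥0∞) ^ (m * n) := by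
  classical
  have hp : (1 : ℝ) < p := Nat.one_lt_cast.mpr (Fact.out : p.Prime).one_lt
  have hp0 : (0 : ℝ) < p := lt_trans one_pos hp
  have hppQ : ((p : ℚ_[p]) : ℚ_[p]) ≠ 0 := Nat.cast_ne_zero.mpr (Fact.out : p.Prime).ne_zero
  have hpowQ : ((p : ℚ_[p]) ^ m) ≠ 0 := pow_ne_zero _ hppQ
  set c : (Fin n → Fin (p ^ m)) → (Fin n → ℚ_[p]) :=
    fun k j => ((k j : ℕ) : ℚ_[p]) / (p : ℚ_[p]) ^ m with hc
  have hcover : closedBall (0 : Fin n → ℚ_[p]) ((p : ℝ) ^ m)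
      ⊆ ⋃ k : Fin n → Fin (p ^ m), closedBall (c k) 1 := by
    intro x hx
    rw [mem_closedBall, dist_zero_right] at hx
    have hxj : ∀ j, ‖(p : ℚ_[p]) ^ m * x j‖ ≤ 1 := by
      intro j
      have h1 : ‖x j‖ ≤ (p : ℝ) ^ m := (norm_le_pi_norm x j).trans hx
      rw [norm_mul, norm_pow, Padic.norm_p]
      calc ((p : ℝ)⁻¹) ^ m * ‖x j‖ ≤ ((p : ℝ)⁻¹) ^ m * (p : ℝ) ^ m :=
            mul_le_mul_of_nonneg_left h1 (by positivity)
        _ = 1 := by rw [← mul_pow, inv_mul_cancel₀ (ne_of_gt hp0), one_pow]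
    set z : Fin n → ℤ_[p] := fun j => ⟨(p : ℚ_[p]) ^ m * x j, hxj j⟩ with hz
    set k : Fin n → Fin (p ^ m) := fun j => ⟨(z j).appr m, PadicInt.appr_lt _ _⟩ with hk
    refine Set.mem_iUnion.mpr ⟨k, ?_⟩
    rw [mem_closedBall]
    refine (dist_pi_le_iff zero_le_one).mpr fun j => ?_
    have hspec : ‖z j - ((z j).appr m : ℤ_[p])‖ ≤ (p : ℝ) ^ (-(m : ℤ)) :=
      (PadicInt.norm_le_pow_iff_mem_span_pow _ m).mpr (PadicInt.appr_spec m (z j))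
    have hxz : x j = ((z j : ℚ_[p])) / (p : ℚ_[p]) ^ m := by
      exact (eq_div_iff hpowQ).mpr (mul_comm _ _)
    rw [dist_eq_norm, hxz, hc]
    have : (z j : ℚ_[p]) / (p : ℚ_[p]) ^ m - ((k j : ℕ) : ℚ_[p]) / (p : ℚ_[p]) ^ m
        = ((z j - ((z j).appr m : ℤ_[p]) : ℤ_[p]) : ℚ_[p]) / (p : ℚ_[p]) ^ m := by
      rw [hk]
      push_cast
      field_simp
      try ring
    rw [this, norm_div, PadicInt.padic_norm_e_of_padicInt, norm_pow, Padic.norm_p]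
    calc ‖z j - ((z j).appr m : ℤ_[p])‖ / ((p:ℝ)⁻¹) ^ m
        ≤ (p : ℝ) ^ (-(m : ℤ)) / ((p:ℝ)⁻¹) ^ m := by
          apply div_le_div_of_nonneg_right hspec ?_ |>.trans_eq rfl
          · positivity
      _ = 1 := by
          rw [zpow_neg, zpow_natCast, inv_pow]
          field_simp
  calc μ (closedBall (0 : Fin n → ℚ_[p]) ((p : ℝ) ^ m))
      ≤ μ (⋃ k : Fin n → Fin (p ^ m), closedBall (c k) 1) := measure_mono hcover
    _ ≤ ∑' k : Fin n → Fin (p ^ m), μ (closedBall (c k) 1) := measure_iUnion_le _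
    _ = ∑' _k : Fin n → Fin (p ^ m), (1 : ℝ≥0∞) := by
        refine tsum_congr fun k => ?_
        have : closedBall (c k) 1 = (fun y => y + (-(c k))) ⁻¹' closedBall 0 1 := by
          ext y
          simp [mem_closedBall, dist_eq_norm, sub_eq_add_neg]
        rw [this, measure_preimage_add_right, hμ]
    _ = (p : ℝ≥0∞) ^ (m * n) := by
        rw [tsum_eq_sum (s := Finset.univ) (by simp), Finset.sum_const, Finset.card_univ,
          Fintype.card_fun, Fintype.card_fin, Fintype.card_fin, nsmul_eq_mul, mul_one]
        push_cast
        rw [← pow_mul]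

end Aux
end PadicHeat
open MeasureTheory Filter Topology Metric
open scoped ENNReal

namespace PadicHeat
namespace Aux

variable {p : ℕ} [Fact p.Prime] {n : ℕ}

lemma summable_main {c q : ℝ} (hc : 0 < c) (hq : 1 < q) {d : ℝ} (hd : 1 ≤ d) :
    Summable fun m : ℕ => d ^ (m + 1) * Real.exp (-(c * q ^ m)) := by
  have hd0 : (0 : ℝ) < d := lt_of_lt_of_le one_pos hd
  refine summable_of_ratio_norm_eventually_le (r := 1/2) (by norm_num) ?_
  have hxtop : Tendsto (fun m : ℕ => (c * (q - 1)) * q ^ m) atTop atTop :=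
    (tendsto_pow_atTop_atTop_of_one_lt hq).const_mul_atTop
      (mul_pos hc (sub_pos.mpr hq))
  have h0 : Tendsto (fun m : ℕ => d * Real.exp (-((c * (q - 1)) * q ^ m))) atTop (𝓝 (d * 0)) :=
    tendsto_const_nhds.mul (Real.tendsto_exp_neg_atTop_nhds_zero.comp hxtop)
  rw [mul_zero] at h0
  filter_upwards [h0.eventually (eventually_le_nhds (by norm_num : (0:ℝ) < 1/2))] with m hm
  have hsplit : Real.exp (-(c * q ^ (m + 1)))
      = Real.exp (-((c * (q - 1)) * q ^ m)) * Real.exp (-(c * q ^ m)) := by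
    rw [← Real.exp_add]; congr 1; rw [pow_succ]; ring
  have hnn : (0:ℝ) ≤ d ^ (m + 1) * Real.exp (-(c * q ^ m)) := by positivity
  rw [Real.norm_of_nonneg (by positivity), Real.norm_of_nonneg hnn]
  calc d ^ (m + 1 + 1) * Real.exp (-(c * q ^ (m + 1)))
      = (d * Real.exp (-((c * (q - 1)) * q ^ m))) * (d ^ (m + 1) * Real.exp (-(c * q ^ m))) := by
        rw [hsplit, pow_succ]; ring
    _ ≤ (1/2) * (d ^ (m + 1) * Real.exp (-(c * q ^ m))) :=
        mul_le_mul_of_nonneg_right hm hnn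

section Kernel

variable (μ : Measure (Fin n → ℚ_[p])) [μ.IsAddHaarMeasure]
variable {β C₀ t : ℝ} {A : (Fin n → ℚ_[p]) → ℝ} {g : ℝ → ℝ}

/-- the region of integration -/
def bigS : Set (Fin n → ℚ_[p]) := {ξ | 1 < ‖ξ‖}

lemma measurableSet_bigS : MeasurableSet (bigS : Set (Fin n → ℚ_[p])) := by
  have : (bigS : Set (Fin n → ℚ_[p])) = (fun x : Fin n → ℚ_[p] => ‖x‖) ⁻¹' (Set.Ioi 1) := rfl
  rw [this]
  exact measurable_norm measurableSet_Ioi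

lemma measurable_bigE (hrad : ∀ ξ : Fin n → ℚ_[p], A ξ = g ‖ξ‖) (t : ℝ) :
    Measurable fun ξ : Fin n → ℚ_[p] => Real.exp (-(t * A ξ)) := by
  have : (fun ξ : Fin n → ℚ_[p] => Real.exp (-(t * A ξ)))
      = fun ξ : Fin n → ℚ_[p] => (fun r => Real.exp (-(t * g r))) ‖ξ‖ := by
    funext ξ; rw [hrad]
  rw [this]
  exact measurable_radial_comp (fun r => Real.exp (-(t * g r)))

lemma tailSet_subset_ball (M : ℕ) (ξ : Fin n → ℚ_[p]) (h1 : (p:ℝ) ^ M < ‖ξ‖)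
    (h2 : ‖ξ‖ ≤ (p:ℝ) ^ (M + 1)) : ξ ∈ closedBall (0 : Fin n → ℚ_[p]) ((p:ℝ) ^ (M+1)) := by
  rw [mem_closedBall, dist_zero_right]; exact h2

lemma exists_shell {ξ : Fin n → ℚ_[p]} (hξ : 1 < ‖ξ‖) :
    ∃ m : ℕ, (p:ℝ) ^ m < ‖ξ‖ ∧ ‖ξ‖ ≤ (p:ℝ) ^ (m + 1) := by
  have hp : (1 : ℝ) < p := Nat.one_lt_cast.mpr (Fact.out : p.Prime).one_lt
  rcases norm_val_cases ξ with h | ⟨z, hz⟩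
  · rw [h] at hξ; linarith
  · have hz1 : 1 ≤ z := by
      by_contra hzneg
      push_neg at hzneg
      have : (p:ℝ) ^ z ≤ 1 := by
        apply zpow_le_one_of_nonpos₀ hp.le
        omega
      rw [hz] at hξ; linarith
    refine ⟨(z - 1).toNat, ?_, ?_⟩
    · rw [hz, ← zpow_natCast]
      apply zpow_lt_zpow_right₀ hp
      omega
    · rw [hz, ← zpow_natCast]
      apply zpow_le_zpow_right₀ hp.le
      omega

lemma lintegral_E_lt_top
    (hμ : μ (closedBall (0 : Fin n → ℚ_[p]) 1) = 1)
    (hβ : 0 < β) (hC₀ : 0 < C₀) (ht : 0 < t)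
    (hrad : ∀ ξ : Fin n → ℚ_[p], A ξ = g ‖ξ‖)
    (hlow : ∀ ξ : Fin n → ℚ_[p], C₀ * ‖ξ‖ ^ β ≤ A ξ) :
    ∫⁻ ξ in bigS, ENNReal.ofReal (Real.exp (-(t * A ξ))) ∂μ < ⊤ := by
  have hp : (1 : ℝ) < p := Nat.one_lt_cast.mpr (Fact.out : p.Prime).one_lt
  have hp0 : (0 : ℝ) < p := lt_trans one_pos hp
  set q : ℝ := (p : ℝ) ^ β with hqdef
  have hq : 1 < q := Real.one_lt_rpow_iff_of_pos hp0 |>.mpr (Or.inl ⟨hp, hβ⟩)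
  set Sm : ℕ → Set (Fin n → ℚ_[p]) :=
    fun m => {ξ | (p:ℝ) ^ m < ‖ξ‖} ∩ {ξ | ‖ξ‖ ≤ (p:ℝ) ^ (m + 1)} with hSm
  have hSsub : (bigS : Set (Fin n → ℚ_[p])) ⊆ ⋃ m, Sm m := by
    intro ξ hξ
    obtain ⟨m, h1, h2⟩ := exists_shell hξ
    exact Set.mem_iUnion.mpr ⟨m, h1, h2⟩
  have hpoint : ∀ m : ℕ, ∀ ξ ∈ Sm m,
      ENNReal.ofReal (Real.exp (-(t * A ξ))) ≤ ENNReal.ofReal (Real.exp (-(t * C₀ * q ^ m))) := by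
    intro m ξ hmem
    apply ENNReal.ofReal_le_ofReal
    apply Real.exp_le_exp.mpr
    have hA : t * C₀ * q ^ m ≤ t * A ξ := by
      have hq1 : q ^ m ≤ ‖ξ‖ ^ β := by
        have h1 : ((p:ℝ) ^ m : ℝ) ^ β ≤ ‖ξ‖ ^ β :=
          Real.rpow_le_rpow (by positivity) hmem.1.le hβ.le
        calc q ^ m = ((p:ℝ) ^ m : ℝ) ^ β := by
              rw [hqdef, ← Real.rpow_natCast ((p:ℝ) ^ β) m, ← Real.rpow_natCast (p:ℝ) m,
                ← Real.rpow_mul hp0.le, ← Real.rpow_mul hp0.le, mul_comm]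
          _ ≤ ‖ξ‖ ^ β := h1
      calc t * C₀ * q ^ m ≤ t * (C₀ * ‖ξ‖ ^ β) := by
            rw [mul_assoc]
            exact mul_le_mul_of_nonneg_left (mul_le_mul_of_nonneg_left hq1 hC₀.le) ht.le
        _ ≤ t * A ξ := mul_le_mul_of_nonneg_left (hlow ξ) ht.le
    linarith
  have hmeasSm : ∀ m, MeasurableSet (Sm m) := by
    intro m
    exact ((measurable_norm (α := Fin n → ℚ_[p]) measurableSet_Ioi)).inter
      ((measurable_norm measurableSet_Iic))
  calc ∫⁻ ξ in bigS, ENNReal.ofReal (Real.exp (-(t * A ξ))) ∂μ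
      ≤ ∫⁻ ξ in ⋃ m, Sm m, ENNReal.ofReal (Real.exp (-(t * A ξ))) ∂μ :=
        lintegral_mono_set hSsub
    _ ≤ ∑' m, ∫⁻ ξ in Sm m, ENNReal.ofReal (Real.exp (-(t * A ξ))) ∂μ :=
        lintegral_iUnion_le _ _
    _ ≤ ∑' m, ENNReal.ofReal ((p:ℝ) ^ (n * (m+1)) * Real.exp (-(t * C₀ * q ^ m))) := by
        refine ENNReal.tsum_le_tsum fun m => ?_
        calc ∫⁻ ξ in Sm m, ENNReal.ofReal (Real.exp (-(t * A ξ))) ∂μ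
            ≤ ∫⁻ _ in Sm m, ENNReal.ofReal (Real.exp (-(t * C₀ * q ^ m))) ∂μ :=
              setLIntegral_mono' (hmeasSm m) (hpoint m)
          _ = ENNReal.ofReal (Real.exp (-(t * C₀ * q ^ m))) * μ (Sm m) := setLIntegral_const _ _
          _ ≤ ENNReal.ofReal (Real.exp (-(t * C₀ * q ^ m))) * (p : ℝ≥0∞) ^ ((m+1) * n) := by
              apply mul_le_mul_right
              refine le_trans (measure_mono ?_) (measure_closedBall_le μ hμ (m+1))
              intro ξ hξ
              rw [mem_closedBall, dist_zero_right]
              exact hξ.2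
          _ = ENNReal.ofReal ((p:ℝ) ^ (n * (m+1)) * Real.exp (-(t * C₀ * q ^ m))) := by
              have hpow : (p : ℝ≥0∞) ^ ((m+1) * n) = ENNReal.ofReal ((p:ℝ) ^ (n * (m+1))) := by
                rw [ENNReal.ofReal_pow hp0.le, ENNReal.ofReal_natCast, mul_comm n (m+1)]
              rw [ENNReal.ofReal_mul (by positivity), hpow, mul_comm]
    _ < ⊤ := by
        have hsum : Summable fun m : ℕ => (p:ℝ) ^ (n * (m+1)) * Real.exp (-(t * C₀ * q ^ m)) := by
          have h := summable_main (c := t * C₀) (q := q) (mul_pos ht hC₀) hq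
            (d := (p:ℝ) ^ n) (one_le_pow₀ hp.le)
          simpa [← pow_mul] using h
        rw [← ENNReal.ofReal_tsum_of_nonneg (fun m => by positivity) hsum]
        exact ENNReal.ofReal_lt_top

end Kernel
end Aux
end PadicHeat
open MeasureTheory Filter Topology Metric
open scoped ENNReal

namespace PadicHeat
namespace Aux

variable {p : ℕ} [Fact p.Prime] {n : ℕ}
variable (μ : Measure (Fin n → ℚ_[p])) [μ.IsAddHaarMeasure]
variable {β C₀ t : ℝ} {A : (Fin n → ℚ_[p]) → ℝ} {g : ℝ → ℝ}

lemma integrable_E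
    (hμ : μ (closedBall (0 : Fin n → ℚ_[p]) 1) = 1)
    (hβ : 0 < β) (hC₀ : 0 < C₀) (ht : 0 < t)
    (hrad : ∀ ξ : Fin n → ℚ_[p], A ξ = g ‖ξ‖)
    (hlow : ∀ ξ : Fin n → ℚ_[p], C₀ * ‖ξ‖ ^ β ≤ A ξ) :
    Integrable (fun ξ => Real.exp (-(t * A ξ))) (μ.restrict bigS) := by
  constructor
  · exact (measurable_bigE hrad t).aestronglyMeasurable
  · rw [hasFiniteIntegral_iff_ofReal (Eventually.of_forall fun ξ => (Real.exp_pos _).le)]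
    exact lintegral_E_lt_top μ hμ hβ hC₀ ht hrad hlow

/-- tail sets -/
def tailS (M : ℕ) : Set (Fin n → ℚ_[p]) := {ξ | (p:ℝ) ^ M < ‖ξ‖}

lemma measurableSet_tailS (M : ℕ) : MeasurableSet (tailS M : Set (Fin n → ℚ_[p])) :=
  measurable_norm (measurableSet_Ioi (a := (p:ℝ) ^ M))

lemma tailS_subset_bigS (M : ℕ) : (tailS M : Set (Fin n → ℚ_[p])) ⊆ bigS := by
  intro ξ hξ
  have hp : (1 : ℝ) < p := Nat.one_lt_cast.mpr (Fact.out : p.Prime).one_lt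
  have : (1:ℝ) ≤ (p:ℝ) ^ M := one_le_pow₀ hp.le
  exact lt_of_le_of_lt this hξ

lemma tailS_zero_subset : (bigS : Set (Fin n → ℚ_[p])) ⊆ tailS 0 := by
  intro ξ hξ; simpa [tailS, bigS] using hξ

lemma tail_integral_nonneg (M : ℕ) :
    0 ≤ ∫ ξ in tailS M, Real.exp (-(t * A ξ)) ∂μ :=
  setIntegral_nonneg (measurableSet_tailS M) fun ξ _ => (Real.exp_pos _).le

lemma tendsto_tail_integral
    (hμ : μ (closedBall (0 : Fin n → ℚ_[p]) 1) = 1)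
    (hβ : 0 < β) (hC₀ : 0 < C₀) (ht : 0 < t)
    (hrad : ∀ ξ : Fin n → ℚ_[p], A ξ = g ‖ξ‖)
    (hlow : ∀ ξ : Fin n → ℚ_[p], C₀ * ‖ξ‖ ^ β ≤ A ξ) :
    Tendsto (fun M : ℕ => ∫ ξ in tailS M, Real.exp (-(t * A ξ)) ∂μ) atTop (𝓝 0) := by
  have hp : (1 : ℝ) < p := Nat.one_lt_cast.mpr (Fact.out : p.Prime).one_lt
  have hintS : Integrable ((bigS : Set (Fin n → ℚ_[p])).indicator
      fun ξ => Real.exp (-(t * A ξ))) μ :=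
    (integrable_indicator_iff measurableSet_bigS).mpr
      (integrable_E μ hμ hβ hC₀ ht hrad hlow)
  have hmain : Tendsto (fun M : ℕ => ∫ ξ, (tailS M : Set (Fin n → ℚ_[p])).indicator
      (fun ξ => Real.exp (-(t * A ξ))) ξ ∂μ) atTop (𝓝 (∫ _ξ, (0:ℝ) ∂μ)) := by
    apply tendsto_integral_of_dominated_convergence
      ((bigS : Set (Fin n → ℚ_[p])).indicator fun ξ => Real.exp (-(t * A ξ)))
    · intro M
      exact ((measurable_bigE hrad t).indicator (measurableSet_tailS M)).aestronglyMeasurable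
    · exact hintS
    · intro M
      refine Eventually.of_forall fun ξ => ?_
      rw [Real.norm_of_nonneg (Set.indicator_nonneg (fun x _ => (Real.exp_pos _).le) _)]
      exact Set.indicator_le_indicator_of_subset (tailS_subset_bigS M)
        (fun x => (Real.exp_pos _).le) ξ
    · refine Eventually.of_forall fun ξ => ?_
      have hev : ∀ᶠ M : ℕ in atTop, (tailS M : Set (Fin n → ℚ_[p])).indicator
          (fun ξ => Real.exp (-(t * A ξ))) ξ = 0 := by
        have hnorm : Tendsto (fun M : ℕ => (p:ℝ) ^ M) atTop atTop :=
          tendsto_pow_atTop_atTop_of_one_lt hp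
        filter_upwards [hnorm.eventually_ge_atTop ‖ξ‖] with M hM
        apply Set.indicator_of_notMem
        simp only [tailS, Set.mem_setOf_eq, not_lt]
        exact hM
      exact Tendsto.congr' (hev.mono fun M hM => hM.symm) tendsto_const_nhds
  simp only [integral_zero] at hmain
  refine hmain.congr fun M => ?_
  rw [integral_indicator (measurableSet_tailS M)]

section L1
variable {f : (Fin n → ℚ_[p]) → ℂ}

lemma prob_restrict (hμ : μ (closedBall (0 : Fin n → ℚ_[p]) 1) = 1) :
    IsProbabilityMeasure (μ.restrict (closedBall (0 : Fin n → ℚ_[p]) 1)) :=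
  ⟨by rw [Measure.restrict_apply_univ]; exact hμ⟩

lemma ae_eq_indicator (hsupp : ∀ᵐ x ∂μ, 1 < ‖x‖ → f x = 0) :
    f =ᵐ[μ] (closedBall (0 : Fin n → ℚ_[p]) 1).indicator f := by
  filter_upwards [hsupp] with x hx
  by_cases hmem : x ∈ closedBall (0 : Fin n → ℚ_[p]) 1
  · rw [Set.indicator_of_mem hmem]
  · rw [Set.indicator_of_notMem hmem]
    apply hx
    rw [mem_closedBall, dist_zero_right, not_le] at hmem
    exact hmem

lemma integrable_of_L20 (hμ : μ (closedBall (0 : Fin n → ℚ_[p]) 1) = 1)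
    (hf2 : MemLp f 2 μ) (hsupp : ∀ᵐ x ∂μ, 1 < ‖x‖ → f x = 0) :
    Integrable f μ := by
  have hprob := prob_restrict μ hμ
  have h2 : MemLp f 2 (μ.restrict (closedBall (0 : Fin n → ℚ_[p]) 1)) := hf2.restrict _
  have h1 : MemLp f 1 (μ.restrict (closedBall (0 : Fin n → ℚ_[p]) 1)) :=
    h2.mono_exponent (by norm_num)
  have hint : IntegrableOn f (closedBall (0 : Fin n → ℚ_[p]) 1) μ :=
    memLp_one_iff_integrable.mp h1
  have := (integrable_indicator_iff (measurableSet_closedBall :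
      MeasurableSet (closedBall (0 : Fin n → ℚ_[p]) 1))).mpr hint
  exact this.congr (ae_eq_indicator μ hsupp).symm

lemma l1_norm_le (hμ : μ (closedBall (0 : Fin n → ℚ_[p]) 1) = 1)
    (hf2 : MemLp f 2 μ) (hsupp : ∀ᵐ x ∂μ, 1 < ‖x‖ → f x = 0)
    (hnorm : eLpNorm f 2 μ ≤ 1) : ∫ x, ‖f x‖ ∂μ ≤ 1 := by
  set B := closedBall (0 : Fin n → ℚ_[p]) 1
  have hprob := prob_restrict μ hμ
  have hint : Integrable f μ := integrable_of_L20 μ hμ hf2 hsupp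
  have hintB : Integrable f (μ.restrict B) := hint.restrict
  have key : ENNReal.ofReal (∫ x, ‖f x‖ ∂μ) ≤ 1 := by
    have h1 : ∫ x, ‖f x‖ ∂μ = ∫ x in B, ‖f x‖ ∂μ := by
      rw [← integral_indicator (measurableSet_closedBall)]
      refine integral_congr_ae ?_
      filter_upwards [ae_eq_indicator μ hsupp] with x hx
      rw [← norm_indicator_eq_indicator_norm]
      rw [hx]
    rw [h1, ofReal_integral_norm_eq_lintegral_enorm hintB,
      ← eLpNorm_one_eq_lintegral_enorm]
    calc eLpNorm f 1 (μ.restrict B) ≤ eLpNorm f 2 (μ.restrict B) :=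
          eLpNorm_le_eLpNorm_of_exponent_le (by norm_num) hintB.aestronglyMeasurable
      _ ≤ eLpNorm f 2 μ := eLpNorm_mono_measure f Measure.restrict_le_self
      _ ≤ 1 := hnorm
  rw [← ENNReal.ofReal_one] at key
  have := (ENNReal.ofReal_le_ofReal_iff (by norm_num)).mp key
  exact this

lemma l1_norm_nonneg : 0 ≤ ∫ x, ‖f x‖ ∂μ := integral_nonneg fun x => norm_nonneg _

end L1
end Aux
end PadicHeat
open MeasureTheory Filter Topology Metric
open scoped ENNReal

namespace PadicHeat


namespace Aux

variable {p : ℕ} [Fact p.Prime] {n : ℕ}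
variable (μ : Measure (Fin n → ℚ_[p])) [μ.IsAddHaarMeasure]
variable {β C₀ t : ℝ} {A : (Fin n → ℚ_[p]) → ℝ} {g : ℝ → ℝ}
variable {ψ : ℚ_[p] → ℂ} {f : (Fin n → ℚ_[p]) → ℂ}

lemma aesm_fourier (hψcont : Continuous ψ) (hf : AEStronglyMeasurable f μ) :
    AEStronglyMeasurable (fourierQ μ ψ f) μ := by
  have h : AEStronglyMeasurable
      (fun z : (Fin n → ℚ_[p]) × (Fin n → ℚ_[p]) => ψ (dotQ z.1 z.2) * f z.2) (μ.prod μ) := by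
    refine AEStronglyMeasurable.mul ?_ ?_
    · exact (hψcont.comp continuous_dotQ).aestronglyMeasurable
    · exact hf.comp_quasiMeasurePreserving Measure.quasiMeasurePreserving_snd
  exact h.integral_prod_right'

lemma norm_fourier_le (hψnorm : ∀ a : ℚ_[p], ‖ψ a‖ = 1) (ξ : Fin n → ℚ_[p]) :
    ‖fourierQ μ ψ f ξ‖ ≤ ∫ x, ‖f x‖ ∂μ := by
  refine (norm_integral_le_integral_norm _).trans (le_of_eq ?_)
  refine integral_congr_ae (Eventually.of_forall fun x => ?_)
  simp only [norm_mul, hψnorm, one_mul]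

lemma fourier_add_inv (hψadd : ∀ a b : ℚ_[p], ψ (a + b) = ψ a * ψ b)
    (hψtriv : ∀ a : ℚ_[p], ‖a‖ ≤ 1 → ψ a = 1)
    (hsupp : ∀ᵐ x ∂μ, 1 < ‖x‖ → f x = 0)
    {u : Fin n → ℚ_[p]} (hu : ‖u‖ ≤ 1) (ξ : Fin n → ℚ_[p]) :
    fourierQ μ ψ f (ξ + u) = fourierQ μ ψ f ξ := by
  unfold fourierQ
  refine integral_congr_ae ?_
  filter_upwards [hsupp] with x hx
  by_cases hxb : ‖x‖ ≤ 1
  · rw [dotQ_add_left, hψadd]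
    have h1 : ‖dotQ u x‖ ≤ 1 := by
      refine (norm_dotQ_le u x).trans ?_
      calc ‖u‖ * ‖x‖ ≤ 1 * 1 := mul_le_mul hu hxb (norm_nonneg x) zero_le_one
        _ = 1 := by norm_num
    rw [hψtriv _ h1, mul_one]
  · rw [hx (not_le.mp hxb), mul_zero, mul_zero]

section Rep

variable (hμ : μ (closedBall (0 : Fin n → ℚ_[p]) 1) = 1)
variable (hβ : 0 < β) (hC₀ : 0 < C₀) (ht : 0 < t)
variable (hrad : ∀ ξ : Fin n → ℚ_[p], A ξ = g ‖ξ‖)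
variable (hlow : ∀ ξ : Fin n → ℚ_[p], C₀ * ‖ξ‖ ^ β ≤ A ξ)
variable (hψcont : Continuous ψ)
variable (hψadd : ∀ a b : ℚ_[p], ψ (a + b) = ψ a * ψ b)
variable (hψnorm : ∀ a : ℚ_[p], ‖ψ a‖ = 1)
variable (hψtriv : ∀ a : ℚ_[p], ‖a‖ ≤ 1 → ψ a = 1)

include hμ hβ hC₀ ht hrad hlow hψcont hψadd hψnorm hψtriv

lemma heatT_rep
    (hf2 : MemLp f 2 μ) (hsupp : ∀ᵐ x ∂μ, 1 < ‖x‖ → f x = 0) (x : Fin n → ℚ_[p]) :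
    heatT μ ψ A t f x
      = ∫ ξ in bigS, ψ (-dotQ x ξ) * (Real.exp (-(t * A ξ)) : ℂ) * fourierQ μ ψ f ξ ∂μ := by
  have hfint : Integrable f μ := integrable_of_L20 μ hμ hf2 hsupp
  have hfx : Integrable (fun y => f (x - y)) μ := hfint.comp_sub_left x
  rw [heatT, if_neg (ne_of_gt ht)]
  have hswap : Integrable (Function.uncurry fun y ξ =>
      ψ (-dotQ y ξ) * (Real.exp (-(t * A ξ)) : ℂ) * f (x - y)) (μ.prod (μ.restrict bigS)) := by
    have hprod : Integrable (fun z : (Fin n → ℚ_[p]) × (Fin n → ℚ_[p]) =>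
        ‖f (x - z.1)‖ * Real.exp (-(t * A z.2))) (μ.prod (μ.restrict bigS)) :=
      Integrable.mul_prod hfx.norm (integrable_E μ hμ hβ hC₀ ht hrad hlow)
    refine hprod.mono ?_ (Eventually.of_forall fun z => le_of_eq ?_)
    · refine AEStronglyMeasurable.mul (AEStronglyMeasurable.mul ?_ ?_) ?_
      · exact (hψcont.comp (continuous_dotQ.neg)).aestronglyMeasurable
      · exact (Complex.measurable_ofReal.comp
          ((measurable_bigE hrad t).comp measurable_snd)).aestronglyMeasurable
      · exact hfx.aestronglyMeasurable.comp_quasiMeasurePreserving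
          Measure.quasiMeasurePreserving_fst
    · simp only [Function.uncurry, norm_mul, hψnorm, one_mul, Complex.norm_real, norm_norm]
      rw [Real.norm_of_nonneg (Real.exp_pos _).le]
      exact mul_comm _ _
  calc ∫ y, heatK μ ψ A t y * f (x - y) ∂μ
      = ∫ y, ∫ ξ in bigS, ψ (-dotQ y ξ) * (Real.exp (-(t * A ξ)) : ℂ) * f (x - y) ∂μ ∂μ := by
        refine integral_congr_ae (Eventually.of_forall fun y => ?_)
        have hK : heatK μ ψ A t y
            = ∫ ξ in bigS, ψ (-dotQ y ξ) * (Real.exp (-(t * A ξ)) : ℂ) ∂μ := rfl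
        show heatK μ ψ A t y * f (x - y) = _
        rw [hK, ← integral_mul_const]
    _ = ∫ ξ in bigS, ∫ y, ψ (-dotQ y ξ) * (Real.exp (-(t * A ξ)) : ℂ) * f (x - y) ∂μ ∂μ :=
        integral_integral_swap hswap
    _ = ∫ ξ in bigS, ψ (-dotQ x ξ) * (Real.exp (-(t * A ξ)) : ℂ) * fourierQ μ ψ f ξ ∂μ := by
        refine integral_congr_ae (Eventually.of_forall fun ξ => ?_)
        show (∫ y, ψ (-dotQ y ξ) * (Real.exp (-(t * A ξ)) : ℂ) * f (x - y) ∂μ)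
          = ψ (-dotQ x ξ) * (Real.exp (-(t * A ξ)) : ℂ) * fourierQ μ ψ f ξ
        have hsub : ∫ y, ψ (-dotQ y ξ) * (Real.exp (-(t * A ξ)) : ℂ) * f (x - y) ∂μ
            = ∫ z, ψ (-dotQ (x - z) ξ) * (Real.exp (-(t * A ξ)) : ℂ) * f (x - (x - z)) ∂μ :=
          (integral_sub_left_eq_self
            (fun w => ψ (-dotQ w ξ) * (Real.exp (-(t * A ξ)) : ℂ) * f (x - w)) μ x).symm
        rw [hsub]
        have hpt : ∀ z : Fin n → ℚ_[p],
            ψ (-dotQ (x - z) ξ) * (Real.exp (-(t * A ξ)) : ℂ) * f (x - (x - z))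
            = (ψ (-dotQ x ξ) * (Real.exp (-(t * A ξ)) : ℂ)) * (ψ (dotQ ξ z) * f z) := by
          intro z
          have h1 : -dotQ (x - z) ξ = -dotQ x ξ + dotQ z ξ := by
            rw [dotQ_sub_left]; ring
          rw [sub_sub_cancel, h1, hψadd, dotQ_comm ξ z]
          ring
        simp_rw [hpt]
        rw [integral_const_mul]
        rfl

lemma integrable_rep_integrand (hfint : Integrable f μ) (x : Fin n → ℚ_[p]) :
    Integrable (fun ξ => ψ (-dotQ x ξ) * (Real.exp (-(t * A ξ)) : ℂ) * fourierQ μ ψ f ξ)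
      (μ.restrict bigS) := by
  have hboundInt : Integrable (fun ξ => Real.exp (-(t * A ξ)) * (∫ z, ‖f z‖ ∂μ))
      (μ.restrict bigS) := (integrable_E μ hμ hβ hC₀ ht hrad hlow).mul_const _
  refine hboundInt.mono ?_ (Eventually.of_forall fun ξ => ?_)
  · refine AEStronglyMeasurable.mul (AEStronglyMeasurable.mul ?_ ?_) ?_
    · exact (hψcont.comp
        ((continuous_dotQ.comp (Continuous.prodMk_right x)).neg)).aestronglyMeasurable
    · exact (Complex.measurable_ofReal.comp (measurable_bigE hrad t)).aestronglyMeasurable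
    · exact (aesm_fourier μ hψcont hfint.aestronglyMeasurable).restrict
  · rw [norm_mul, norm_mul, hψnorm, one_mul, Complex.norm_real,
      Real.norm_of_nonneg (Real.exp_pos _).le,
      Real.norm_of_nonneg (mul_nonneg (Real.exp_pos _).le (l1_norm_nonneg μ))]
    exact mul_le_mul_of_nonneg_left (norm_fourier_le μ hψnorm ξ) (Real.exp_pos _).le

end Rep
end Aux
end PadicHeat
open MeasureTheory Filter Topology Metric
open scoped ENNReal

namespace PadicHeat
namespace Aux

variable {p : ℕ} [Fact p.Prime] {n : ℕ}
variable (μ : Measure (Fin n → ℚ_[p])) [μ.IsAddHaarMeasure]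
variable {β C₀ t : ℝ} {A : (Fin n → ℚ_[p]) → ℝ} {g : ℝ → ℝ}
variable {ψ : ℚ_[p] → ℂ} {f : (Fin n → ℚ_[p]) → ℂ}

lemma exists_psi_ne_one
    (hψtriv : ∀ a : ℚ_[p], ‖a‖ ≤ 1 → ψ a = 1)
    (hψnontriv : ∃ a : ℚ_[p], ‖a‖ ≤ p ∧ ψ a ≠ 1)
    {x : Fin n → ℚ_[p]} (hx : 1 < ‖x‖) :
    ∃ u : Fin n → ℚ_[p], ‖u‖ ≤ 1 ∧ ψ (dotQ x u) ≠ 1 := by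
  have hp : (1 : ℝ) < p := Nat.one_lt_cast.mpr (Fact.out : p.Prime).one_lt
  obtain ⟨a, ha1, ha2⟩ := hψnontriv
  obtain ⟨j, hj⟩ := exists_norm_coord x (lt_trans one_pos hx)
  have hxj : (1:ℝ) < ‖x j‖ := hj ▸ hx
  have hxj0 : x j ≠ 0 := by
    intro h; rw [h, norm_zero] at hxj; linarith
  have hpge : (p:ℝ) ≤ ‖x j‖ := by
    rw [Padic.norm_eq_zpow_neg_valuation hxj0] at hxj ⊢
    have hv : 1 ≤ -(x j).valuation := by
      by_contra hc
      push_neg at hc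
      have : ((p:ℝ)) ^ (-(x j).valuation) ≤ 1 := zpow_le_one_of_nonpos₀ hp.le (by omega)
      linarith
    calc (p:ℝ) = (p:ℝ) ^ (1:ℤ) := (zpow_one _).symm
      _ ≤ (p:ℝ) ^ (-(x j).valuation) := zpow_le_zpow_right₀ hp.le hv
  set v : ℚ_[p] := a / x j with hv
  have hvnorm : ‖v‖ ≤ 1 := by
    rw [hv, norm_div]
    rw [div_le_one (lt_trans one_pos hxj)]
    exact ha1.trans hpge
  refine ⟨Pi.single j v, ?_, ?_⟩
  · refine (pi_norm_le_iff_of_nonneg zero_le_one).mpr fun i => ?_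
    rcases eq_or_ne i j with rfl | hne
    · rw [Pi.single_eq_same]; exact hvnorm
    · rw [Pi.single_eq_of_ne hne, norm_zero]; exact zero_le_one
  · have hdot : dotQ x (Pi.single j v) = a := by
      unfold dotQ
      rw [Finset.sum_eq_single j]
      · rw [Pi.single_eq_same, hv, mul_comm, div_mul_cancel₀ a hxj0]
      · intro i _ hne
        rw [Pi.single_eq_of_ne hne, mul_zero]
      · intro h; exact absurd (Finset.mem_univ j) h
    rw [hdot]
    exact ha2

section Rep2
variable (hμ : μ (closedBall (0 : Fin n → ℚ_[p]) 1) = 1)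
variable (hβ : 0 < β) (hC₀ : 0 < C₀) (ht : 0 < t)
variable (hrad : ∀ ξ : Fin n → ℚ_[p], A ξ = g ‖ξ‖)
variable (hlow : ∀ ξ : Fin n → ℚ_[p], C₀ * ‖ξ‖ ^ β ≤ A ξ)
variable (hψcont : Continuous ψ)
variable (hψadd : ∀ a b : ℚ_[p], ψ (a + b) = ψ a * ψ b)
variable (hψnorm : ∀ a : ℚ_[p], ‖ψ a‖ = 1)
variable (hψtriv : ∀ a : ℚ_[p], ‖a‖ ≤ 1 → ψ a = 1)
variable (hf2 : MemLp f 2 μ) (hsupp : ∀ᵐ x ∂μ, 1 < ‖x‖ → f x = 0)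

include hμ hβ hC₀ ht hrad hlow hψcont hψadd hψnorm hψtriv hf2 hsupp

lemma heatT_norm_le (x : Fin n → ℚ_[p]) :
    ‖heatT μ ψ A t f x‖
      ≤ (∫ ξ in bigS, Real.exp (-(t * A ξ)) ∂μ) * ∫ z, ‖f z‖ ∂μ := by
  rw [heatT_rep μ hμ hβ hC₀ ht hrad hlow hψcont hψadd hψnorm hψtriv hf2 hsupp x]
  refine (norm_integral_le_integral_norm _).trans ?_
  rw [← integral_mul_const]
  refine integral_mono_of_nonneg (Eventually.of_forall fun ξ => norm_nonneg _)
    ((integrable_E μ hμ hβ hC₀ ht hrad hlow).mul_const _)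
    (Eventually.of_forall fun ξ => ?_)
  simp only [norm_mul, hψnorm, one_mul, Complex.norm_real,
    Real.norm_of_nonneg (Real.exp_pos (-(t * A ξ))).le]
  exact mul_le_mul_of_nonneg_left (norm_fourier_le μ hψnorm ξ) (Real.exp_pos _).le

lemma heatT_diff_le (M : ℕ) {x x' : Fin n → ℚ_[p]}
    (hxx : ‖x - x'‖ ≤ ((p:ℝ) ^ M)⁻¹) :
    ‖heatT μ ψ A t f x - heatT μ ψ A t f x'‖
      ≤ 2 * (∫ z, ‖f z‖ ∂μ) * ∫ ξ in tailS M, Real.exp (-(t * A ξ)) ∂μ := by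
  have hp : (1 : ℝ) < p := Nat.one_lt_cast.mpr (Fact.out : p.Prime).one_lt
  have hfint : Integrable f μ := integrable_of_L20 μ hμ hf2 hsupp
  set E : (Fin n → ℚ_[p]) → ℝ := fun ξ => Real.exp (-(t * A ξ)) with hE
  set h : (Fin n → ℚ_[p]) → ℂ :=
    fun ξ => (ψ (-dotQ x ξ) - ψ (-dotQ x' ξ)) * (E ξ : ℂ) * fourierQ μ ψ f ξ with hh
  have hrw : heatT μ ψ A t f x - heatT μ ψ A t f x' = ∫ ξ in bigS, h ξ ∂μ := by
    rw [heatT_rep μ hμ hβ hC₀ ht hrad hlow hψcont hψadd hψnorm hψtriv hf2 hsupp x,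
      heatT_rep μ hμ hβ hC₀ ht hrad hlow hψcont hψadd hψnorm hψtriv hf2 hsupp x',
      ← integral_sub
        (integrable_rep_integrand μ hμ hβ hC₀ ht hrad hlow hψcont hψadd hψnorm hψtriv hfint x)
        (integrable_rep_integrand μ hμ hβ hC₀ ht hrad hlow hψcont hψadd hψnorm hψtriv hfint x')]
    refine integral_congr_ae (Eventually.of_forall fun ξ => ?_)
    show ψ (-dotQ x ξ) * (E ξ : ℂ) * fourierQ μ ψ f ξ
        - ψ (-dotQ x' ξ) * (E ξ : ℂ) * fourierQ μ ψ f ξ = h ξ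
    rw [hh]; ring
  have hzero : ∀ ξ ∈ bigS \ tailS M, h ξ = 0 := by
    rintro ξ ⟨_, hnot⟩
    have hle : ‖ξ‖ ≤ (p:ℝ) ^ M := by
      simp only [tailS, Set.mem_setOf_eq, not_lt] at hnot
      exact hnot
    have harg : -dotQ x ξ = -dotQ x' ξ + -(dotQ (x - x') ξ) := by
      rw [dotQ_sub_left]; ring
    have htr : ψ (-(dotQ (x - x') ξ)) = 1 := by
      apply hψtriv
      rw [norm_neg]
      refine (norm_dotQ_le _ _).trans ?_
      calc ‖x - x'‖ * ‖ξ‖ ≤ ((p:ℝ) ^ M)⁻¹ * (p:ℝ) ^ M :=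
            mul_le_mul hxx hle (norm_nonneg _) (by positivity)
        _ = 1 := inv_mul_cancel₀ (by positivity)
    have : ψ (-dotQ x ξ) = ψ (-dotQ x' ξ) := by
      rw [harg, hψadd, htr, mul_one]
    rw [hh]
    simp [this]
  have hdom : ∫ ξ in bigS, h ξ ∂μ = ∫ ξ in tailS M, h ξ ∂μ := by
    rw [← integral_indicator measurableSet_bigS, ← integral_indicator (measurableSet_tailS M)]
    congr 1
    funext ξ
    by_cases h1 : ξ ∈ tailS M
    · rw [Set.indicator_of_mem h1, Set.indicator_of_mem (tailS_subset_bigS M h1)]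
    · rw [Set.indicator_of_notMem h1]
      by_cases h2 : ξ ∈ bigS
      · rw [Set.indicator_of_mem h2]; exact hzero ξ ⟨h2, h1⟩
      · rw [Set.indicator_of_notMem h2]
  rw [hrw, hdom]
  refine (norm_integral_le_integral_norm _).trans ?_
  have hintE : Integrable E (μ.restrict (tailS M)) :=
    (integrable_E μ hμ hβ hC₀ ht hrad hlow).mono_measure
      (Measure.restrict_mono (tailS_subset_bigS M) le_rfl)
  calc ∫ ξ in tailS M, ‖h ξ‖ ∂μ
      ≤ ∫ ξ in tailS M, 2 * (∫ z, ‖f z‖ ∂μ) * E ξ ∂μ := by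
        refine integral_mono_of_nonneg (Eventually.of_forall fun ξ => norm_nonneg _)
          (hintE.const_mul _) (Eventually.of_forall fun ξ => ?_)
        rw [hh]
        simp only [norm_mul, Complex.norm_real,
          Real.norm_of_nonneg (Real.exp_pos (-(t * A ξ))).le]
        rw [Real.norm_of_nonneg (show (0:ℝ) ≤ E ξ from (Real.exp_pos _).le)]
        have h2 : ‖ψ (-dotQ x ξ) - ψ (-dotQ x' ξ)‖ ≤ 2 := by
          refine (norm_sub_le _ _).trans ?_
          rw [hψnorm, hψnorm]; norm_num
        have hf1 : ‖fourierQ μ ψ f ξ‖ ≤ ∫ z, ‖f z‖ ∂μ := norm_fourier_le μ hψnorm ξ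
        calc ‖ψ (-dotQ x ξ) - ψ (-dotQ x' ξ)‖ * E ξ * ‖fourierQ μ ψ f ξ‖
            ≤ 2 * E ξ * (∫ z, ‖f z‖ ∂μ) := by
              apply mul_le_mul
              · exact mul_le_mul_of_nonneg_right h2 (Real.exp_pos _).le
              · exact hf1
              · exact norm_nonneg _
              · positivity
          _ = 2 * (∫ z, ‖f z‖ ∂μ) * E ξ := by ring
    _ = 2 * (∫ z, ‖f z‖ ∂μ) * ∫ ξ in tailS M, E ξ ∂μ := integral_const_mul _ _

lemma heatT_zero_outside
    (hψnontriv : ∃ a : ℚ_[p], ‖a‖ ≤ p ∧ ψ a ≠ 1)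
    (x : Fin n → ℚ_[p]) (hx : 1 < ‖x‖) : heatT μ ψ A t f x = 0 := by
  rw [heatT_rep μ hμ hβ hC₀ ht hrad hlow hψcont hψadd hψnorm hψtriv hf2 hsupp x]
  obtain ⟨u, hu1, hu2⟩ := exists_psi_ne_one hψtriv hψnontriv hx
  set Φ : (Fin n → ℚ_[p]) → ℂ :=
    fun ξ => ψ (-dotQ x ξ) * (Real.exp (-(t * A ξ)) : ℂ) * fourierQ μ ψ f ξ with hΦ
  set c : ℂ := ψ (-dotQ x u) with hc
  have hcne : c ≠ 1 := by
    intro hone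
    apply hu2
    have hprod := psi_mul_neg hψadd hψtriv (dotQ x u)
    rw [hc] at hone
    rw [hone, mul_one] at hprod
    exact hprod
  have hshift : ∀ ξ, (Set.indicator bigS Φ) (ξ + u) = c * (Set.indicator bigS Φ) ξ := by
    intro ξ
    by_cases hmem : ξ ∈ bigS
    · have hmem' : (1:ℝ) < ‖ξ‖ := hmem
      have hnorm : ‖ξ + u‖ = ‖ξ‖ := pi_norm_add_eq_left (lt_of_le_of_lt hu1 hmem')
      have hmem2 : ξ + u ∈ bigS := by
        show (1:ℝ) < ‖ξ + u‖
        rw [hnorm]; exact hmem'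
      rw [Set.indicator_of_mem hmem2, Set.indicator_of_mem hmem, hΦ]
      have h1 : ψ (-dotQ x (ξ + u)) = ψ (-dotQ x ξ) * c := by
        have harg : -dotQ x (ξ + u) = -dotQ x ξ + -dotQ x u := by
          rw [dotQ_comm x (ξ + u), dotQ_add_left, dotQ_comm ξ x, dotQ_comm u x]; ring
        rw [harg, hψadd, hc]
      have h2 : A (ξ + u) = A ξ := by rw [hrad, hrad, hnorm]
      have h3 : fourierQ μ ψ f (ξ + u) = fourierQ μ ψ f ξ :=
        fourier_add_inv μ hψadd hψtriv hsupp hu1 ξ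
      show ψ (-dotQ x (ξ + u)) * (Real.exp (-(t * A (ξ + u))) : ℂ) * fourierQ μ ψ f (ξ + u) = _
      rw [h1, h2, h3]
      ring
    · have hout : ξ + u ∉ bigS := by
        intro hcon
        apply hmem
        have : ‖ξ + u‖ ≤ max ‖ξ‖ ‖u‖ := pi_norm_add_le_max ξ u
        have hle1 : ‖ξ‖ ≤ 1 := not_lt.mp hmem
        have : ‖ξ + u‖ ≤ 1 := this.trans (max_le hle1 hu1)
        exact absurd hcon (not_lt.mpr this)
      rw [Set.indicator_of_notMem hout, Set.indicator_of_notMem hmem, mul_zero]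
  have hkey : ∫ ξ in bigS, Φ ξ ∂μ = c * ∫ ξ in bigS, Φ ξ ∂μ := by
    rw [← integral_indicator measurableSet_bigS]
    conv_lhs => rw [← integral_add_right_eq_self (Set.indicator bigS Φ) u]
    calc ∫ ξ, Set.indicator bigS Φ (ξ + u) ∂μ
        = ∫ ξ, c * Set.indicator bigS Φ ξ ∂μ :=
          integral_congr_ae (Eventually.of_forall hshift)
      _ = c * ∫ ξ, Set.indicator bigS Φ ξ ∂μ := integral_const_mul c _
  have : (1 - c) * ∫ ξ in bigS, Φ ξ ∂μ = 0 := by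
    rw [sub_mul, one_mul, ← hkey, sub_self]
  rcases mul_eq_zero.mp this with hcon | hres
  · exact absurd (sub_eq_zero.mp hcon).symm hcne
  · exact hres

end Rep2
end Aux
end PadicHeat
open MeasureTheory Filter Topology Metric
open scoped ENNReal

namespace PadicHeat
namespace Aux

variable {p : ℕ} [Fact p.Prime] {n : ℕ}
variable (μ : Measure (Fin n → ℚ_[p])) [μ.IsAddHaarMeasure]
variable {β C₀ t : ℝ} {A : (Fin n → ℚ_[p]) → ℝ} {g : ℝ → ℝ}
variable {ψ : ℚ_[p] → ℂ} {f h : (Fin n → ℚ_[p]) → ℂ}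
variable (hμ : μ (closedBall (0 : Fin n → ℚ_[p]) 1) = 1)
variable (hβ : 0 < β) (hC₀ : 0 < C₀) (ht : 0 < t)
variable (hrad : ∀ ξ : Fin n → ℚ_[p], A ξ = g ‖ξ‖)
variable (hlow : ∀ ξ : Fin n → ℚ_[p], C₀ * ‖ξ‖ ^ β ≤ A ξ)
variable (hψcont : Continuous ψ)
variable (hψadd : ∀ a b : ℚ_[p], ψ (a + b) = ψ a * ψ b)
variable (hψnorm : ∀ a : ℚ_[p], ‖ψ a‖ = 1)
variable (hψtriv : ∀ a : ℚ_[p], ‖a‖ ≤ 1 → ψ a = 1)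

lemma conj_fourier
    (hψadd : ∀ a b : ℚ_[p], ψ (a + b) = ψ a * ψ b)
    (hψnorm : ∀ a : ℚ_[p], ‖ψ a‖ = 1)
    (hψtriv : ∀ a : ℚ_[p], ‖a‖ ≤ 1 → ψ a = 1) (ξ : Fin n → ℚ_[p]) :
    (starRingEnd ℂ) (fourierQ μ ψ h ξ) = ∫ x, ψ (-dotQ x ξ) * (starRingEnd ℂ) (h x) ∂μ := by
  rw [fourierQ, ← integral_conj]
  refine integral_congr_ae (Eventually.of_forall fun x => ?_)
  show (starRingEnd ℂ) (ψ (dotQ ξ x) * h x) = _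
  rw [map_mul, conj_psi hψadd hψnorm hψtriv, dotQ_comm ξ x]

include hμ hβ hC₀ ht hrad hlow hψcont hψadd hψnorm hψtriv

lemma pairing_rep
    (hf2 : MemLp f 2 μ) (hsuppf : ∀ᵐ x ∂μ, 1 < ‖x‖ → f x = 0)
    (hh2 : MemLp h 2 μ) (hsupph : ∀ᵐ x ∂μ, 1 < ‖x‖ → h x = 0) :
    ∫ x, heatT μ ψ A t f x * (starRingEnd ℂ) (h x) ∂μ
      = ∫ ξ in bigS, (Real.exp (-(t * A ξ)) : ℂ) * fourierQ μ ψ f ξ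
          * (starRingEnd ℂ) (fourierQ μ ψ h ξ) ∂μ := by
  have hfint : Integrable f μ := integrable_of_L20 μ hμ hf2 hsuppf
  have hhint : Integrable h μ := integrable_of_L20 μ hμ hh2 hsupph
  have hswap : Integrable (Function.uncurry fun x ξ =>
      ψ (-dotQ x ξ) * (Real.exp (-(t * A ξ)) : ℂ) * fourierQ μ ψ f ξ
        * (starRingEnd ℂ) (h x)) (μ.prod (μ.restrict bigS)) := by
    have hprod : Integrable (fun z : (Fin n → ℚ_[p]) × (Fin n → ℚ_[p]) =>
        ‖h z.1‖ * ((∫ w, ‖f w‖ ∂μ) * Real.exp (-(t * A z.2)))) (μ.prod (μ.restrict bigS)) :=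
      Integrable.mul_prod hhint.norm
        ((integrable_E μ hμ hβ hC₀ ht hrad hlow).const_mul _)
    refine hprod.mono ?_ (Eventually.of_forall fun z => ?_)
    · refine AEStronglyMeasurable.mul (AEStronglyMeasurable.mul (AEStronglyMeasurable.mul
        ?_ ?_) ?_) ?_
      · exact (hψcont.comp (continuous_dotQ.neg)).aestronglyMeasurable
      · exact (Complex.measurable_ofReal.comp
          ((measurable_bigE hrad t).comp measurable_snd)).aestronglyMeasurable
      · exact ((aesm_fourier μ hψcont hfint.aestronglyMeasurable).restrict
          (s := bigS)).comp_quasiMeasurePreserving Measure.quasiMeasurePreserving_snd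
      · exact continuous_star.comp_aestronglyMeasurable
          (hhint.aestronglyMeasurable.comp_quasiMeasurePreserving
            Measure.quasiMeasurePreserving_fst)
    · have hE0 : (0:ℝ) ≤ Real.exp (-(t * A z.2)) := (Real.exp_pos _).le
      have hL0 : (0:ℝ) ≤ ∫ w, ‖f w‖ ∂μ := l1_norm_nonneg μ
      have hF : ‖fourierQ μ ψ f z.2‖ ≤ ∫ w, ‖f w‖ ∂μ := norm_fourier_le μ hψnorm z.2
      simp only [Function.uncurry, norm_mul, hψnorm, one_mul, Complex.norm_real,
        RCLike.norm_conj, norm_norm]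
      rw [Real.norm_of_nonneg hE0, Real.norm_of_nonneg hL0]
      nlinarith [mul_nonneg (mul_nonneg (sub_nonneg.mpr hF) hE0) (norm_nonneg (h z.1)),
        norm_nonneg (h z.1), norm_nonneg (fourierQ μ ψ f z.2)]
  calc ∫ x, heatT μ ψ A t f x * (starRingEnd ℂ) (h x) ∂μ
      = ∫ x, ∫ ξ in bigS, ψ (-dotQ x ξ) * (Real.exp (-(t * A ξ)) : ℂ)
          * fourierQ μ ψ f ξ * (starRingEnd ℂ) (h x) ∂μ ∂μ := by
        refine integral_congr_ae (Eventually.of_forall fun x => ?_)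
        show heatT μ ψ A t f x * (starRingEnd ℂ) (h x) = _
        rw [heatT_rep μ hμ hβ hC₀ ht hrad hlow hψcont hψadd hψnorm hψtriv hf2 hsuppf x,
          ← integral_mul_const]
    _ = ∫ ξ in bigS, ∫ x, ψ (-dotQ x ξ) * (Real.exp (-(t * A ξ)) : ℂ)
          * fourierQ μ ψ f ξ * (starRingEnd ℂ) (h x) ∂μ ∂μ := integral_integral_swap hswap
    _ = ∫ ξ in bigS, (Real.exp (-(t * A ξ)) : ℂ) * fourierQ μ ψ f ξ
          * (starRingEnd ℂ) (fourierQ μ ψ h ξ) ∂μ := by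
        refine integral_congr_ae (Eventually.of_forall fun ξ => ?_)
        show ∫ x, ψ (-dotQ x ξ) * (Real.exp (-(t * A ξ)) : ℂ)
            * fourierQ μ ψ f ξ * (starRingEnd ℂ) (h x) ∂μ = _
        have hpt : ∀ x : Fin n → ℚ_[p],
            ψ (-dotQ x ξ) * (Real.exp (-(t * A ξ)) : ℂ)
              * fourierQ μ ψ f ξ * (starRingEnd ℂ) (h x)
            = ((Real.exp (-(t * A ξ)) : ℂ) * fourierQ μ ψ f ξ)
              * (ψ (-dotQ x ξ) * (starRingEnd ℂ) (h x)) := fun x => by ring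
        simp_rw [hpt]
        rw [integral_const_mul, ← conj_fourier μ hψadd hψnorm hψtriv, mul_assoc]

lemma heatT_selfadjoint
    (hf2 : MemLp f 2 μ) (hsuppf : ∀ᵐ x ∂μ, 1 < ‖x‖ → f x = 0)
    (hh2 : MemLp h 2 μ) (hsupph : ∀ᵐ x ∂μ, 1 < ‖x‖ → h x = 0) :
    ∫ x, heatT μ ψ A t f x * (starRingEnd ℂ) (h x) ∂μ
      = ∫ x, f x * (starRingEnd ℂ) (heatT μ ψ A t h x) ∂μ := by
  have key1 := pairing_rep μ hμ hβ hC₀ ht hrad hlow hψcont hψadd hψnorm hψtriv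
    hf2 hsuppf hh2 hsupph
  have key2 := pairing_rep μ hμ hβ hC₀ ht hrad hlow hψcont hψadd hψnorm hψtriv
    hh2 hsupph hf2 hsuppf
  have hrhs : ∫ x, f x * (starRingEnd ℂ) (heatT μ ψ A t h x) ∂μ
      = (starRingEnd ℂ) (∫ x, heatT μ ψ A t h x * (starRingEnd ℂ) (f x) ∂μ) := by
    rw [← integral_conj]
    refine integral_congr_ae (Eventually.of_forall fun x => ?_)
    show f x * (starRingEnd ℂ) (heatT μ ψ A t h x)
        = (starRingEnd ℂ) (heatT μ ψ A t h x * (starRingEnd ℂ) (f x))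
    rw [map_mul, Complex.conj_conj]
    ring
  rw [key1, hrhs, key2, ← integral_conj]
  refine integral_congr_ae (Eventually.of_forall fun ξ => ?_)
  show (Real.exp (-(t * A ξ)) : ℂ) * fourierQ μ ψ f ξ
      * (starRingEnd ℂ) (fourierQ μ ψ h ξ)
    = (starRingEnd ℂ) ((Real.exp (-(t * A ξ)) : ℂ) * fourierQ μ ψ h ξ
      * (starRingEnd ℂ) (fourierQ μ ψ f ξ))
  rw [map_mul, map_mul, Complex.conj_conj, Complex.conj_ofReal]
  ring

lemma heatT_nonneg
    (hf2 : MemLp f 2 μ) (hsuppf : ∀ᵐ x ∂μ, 1 < ‖x‖ → f x = 0) :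
    0 ≤ (∫ x, heatT μ ψ A t f x * (starRingEnd ℂ) (f x) ∂μ).re ∧
      (∫ x, heatT μ ψ A t f x * (starRingEnd ℂ) (f x) ∂μ).im = 0 := by
  have key := pairing_rep μ hμ hβ hC₀ ht hrad hlow hψcont hψadd hψnorm hψtriv
    hf2 hsuppf hf2 hsuppf
  have hpt : ∀ ξ : Fin n → ℚ_[p],
      (Real.exp (-(t * A ξ)) : ℂ) * fourierQ μ ψ f ξ
        * (starRingEnd ℂ) (fourierQ μ ψ f ξ)
      = ((Real.exp (-(t * A ξ)) * Complex.normSq (fourierQ μ ψ f ξ) : ℝ) : ℂ) := by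
    intro ξ
    rw [mul_assoc, Complex.mul_conj]
    push_cast
    ring
  have key2 : ∫ x, heatT μ ψ A t f x * (starRingEnd ℂ) (f x) ∂μ
      = ((∫ ξ in bigS, Real.exp (-(t * A ξ)) * Complex.normSq (fourierQ μ ψ f ξ) ∂μ : ℝ) : ℂ) := by
    rw [key]
    rw [integral_congr_ae (Eventually.of_forall hpt)]
    exact integral_ofReal
  constructor
  · rw [key2, Complex.ofReal_re]
    exact integral_nonneg fun ξ =>
      mul_nonneg (Real.exp_pos _).le (Complex.normSq_nonneg _)
  · rw [key2, Complex.ofReal_im]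

lemma heatT_continuous
    (hf2 : MemLp f 2 μ) (hsupp : ∀ᵐ x ∂μ, 1 < ‖x‖ → f x = 0) :
    Continuous (heatT μ ψ A t f) := by
  rw [Metric.continuous_iff]
  intro x ε hε
  have htail : Tendsto (fun M : ℕ => 2 * (∫ z, ‖f z‖ ∂μ)
      * ∫ ξ in tailS M, Real.exp (-(t * A ξ)) ∂μ) atTop (𝓝 (2 * (∫ z, ‖f z‖ ∂μ) * 0)) :=
    tendsto_const_nhds.mul (tendsto_tail_integral μ hμ hβ hC₀ ht hrad hlow)
  rw [mul_zero] at htail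
  obtain ⟨M, hM⟩ := (htail.eventually (eventually_lt_nhds hε)).exists
  have hp : (1 : ℝ) < p := Nat.one_lt_cast.mpr (Fact.out : p.Prime).one_lt
  refine ⟨((p:ℝ) ^ M)⁻¹, by positivity, fun x' hx' => ?_⟩
  rw [dist_eq_norm]
  refine lt_of_le_of_lt
    (heatT_diff_le μ hμ hβ hC₀ ht hrad hlow hψcont hψadd hψnorm hψtriv hf2 hsupp M ?_) hM
  rw [dist_eq_norm] at hx'
  exact hx'.le

end Aux
end PadicHeat
open MeasureTheory Filter Topology Metric
open scoped ENNReal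

namespace PadicHeat
namespace Aux

variable {p : ℕ} [Fact p.Prime] {n : ℕ}
variable (μ : Measure (Fin n → ℚ_[p])) [μ.IsAddHaarMeasure]
variable {β C₀ t : ℝ} {A : (Fin n → ℚ_[p]) → ℝ} {g : ℝ → ℝ}
variable {ψ : ℚ_[p] → ℂ}

lemma eLpNorm_le_of_bound_support
    (hμ : μ (closedBall (0 : Fin n → ℚ_[p]) 1) = 1)
    {f : (Fin n → ℚ_[p]) → ℂ} {C : ℝ}
    (hb : ∀ x, ‖f x‖ ≤ C) (hs : ∀ x, 1 < ‖x‖ → f x = 0) :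
    eLpNorm f 2 μ ≤ ENNReal.ofReal C := by
  have hind : f = (closedBall (0 : Fin n → ℚ_[p]) 1).indicator f := by
    funext x
    by_cases hx : x ∈ closedBall (0 : Fin n → ℚ_[p]) 1
    · rw [Set.indicator_of_mem hx]
    · rw [Set.indicator_of_notMem hx]
      apply hs
      rw [mem_closedBall, dist_zero_right, not_le] at hx
      exact hx
  calc eLpNorm f 2 μ
      = eLpNorm f 2 (μ.restrict (closedBall (0 : Fin n → ℚ_[p]) 1)) := by
        conv_lhs => rw [hind]
        exact eLpNorm_indicator_eq_eLpNorm_restrict measurableSet_closedBall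
    _ ≤ (μ.restrict (closedBall (0 : Fin n → ℚ_[p]) 1)) Set.univ ^ (2:ℝ≥0∞).toReal⁻¹
        * ENNReal.ofReal C := eLpNorm_le_of_ae_bound (Eventually.of_forall hb)
    _ = ENNReal.ofReal C := by
        rw [Measure.restrict_apply_univ, hμ, ENNReal.one_rpow, one_mul]

section Compact

variable (hμ : μ (closedBall (0 : Fin n → ℚ_[p]) 1) = 1)
variable (hβ : 0 < β) (hC₀ : 0 < C₀) (ht : 0 < t)
variable (hrad : ∀ ξ : Fin n → ℚ_[p], A ξ = g ‖ξ‖)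
variable (hlow : ∀ ξ : Fin n → ℚ_[p], C₀ * ‖ξ‖ ^ β ≤ A ξ)
variable (hψcont : Continuous ψ)
variable (hψadd : ∀ a b : ℚ_[p], ψ (a + b) = ψ a * ψ b)
variable (hψnorm : ∀ a : ℚ_[p], ‖ψ a‖ = 1)
variable (hψtriv : ∀ a : ℚ_[p], ‖a‖ ≤ 1 → ψ a = 1)
variable (hψnontriv : ∃ a : ℚ_[p], ‖a‖ ≤ p ∧ ψ a ≠ 1)

include hμ hβ hC₀ ht hrad hlow hψcont hψadd hψnorm hψtriv hψnontriv

lemma heatT_compact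
    (F : ℕ → (Fin n → ℚ_[p]) → ℂ) (hF : ∀ m, MemL20 μ (F m))
    (hFnorm : ∀ m, eLpNorm (F m) 2 μ ≤ 1) :
    ∃ (φ : ℕ → ℕ) (h : (Fin n → ℚ_[p]) → ℂ), StrictMono φ ∧ MemLp h 2 μ ∧
      Tendsto (fun j => eLpNorm (fun x => heatT μ ψ A t (F (φ j)) x - h x) 2 μ)
        atTop (𝓝 0) := by
  classical
  have hp : (1 : ℝ) < p := Nat.one_lt_cast.mpr (Fact.out : p.Prime).one_lt
  set u : ℕ → (Fin n → ℚ_[p]) → ℂ := fun m => heatT μ ψ A t (F m) with hu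
  set IE : ℝ := ∫ ξ in bigS, Real.exp (-(t * A ξ)) ∂μ with hIE
  have hIE0 : 0 ≤ IE :=
    integral_nonneg fun ξ => (Real.exp_pos _).le
  set tl : ℕ → ℝ := fun M => ∫ ξ in tailS M, Real.exp (-(t * A ξ)) ∂μ with htl
  have htl0 : ∀ M, 0 ≤ tl M := fun M => tail_integral_nonneg μ M
  have htltend : Tendsto tl atTop (𝓝 0) := tendsto_tail_integral μ hμ hβ hC₀ ht hrad hlow
  have hL1 : ∀ m, ∫ z, ‖F m z‖ ∂μ ≤ 1 :=
    fun m => l1_norm_le μ hμ (hF m).1 (hF m).2.1 (hFnorm m)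
  have hL10 : ∀ m, 0 ≤ ∫ z, ‖F m z‖ ∂μ := fun m => l1_norm_nonneg μ
  -- uniform bound
  have hbound : ∀ m x, ‖u m x‖ ≤ IE := by
    intro m x
    refine (heatT_norm_le μ hμ hβ hC₀ ht hrad hlow hψcont hψadd hψnorm hψtriv
      (hF m).1 (hF m).2.1 x).trans ?_
    calc IE * ∫ z, ‖F m z‖ ∂μ ≤ IE * 1 := mul_le_mul_of_nonneg_left (hL1 m) hIE0
      _ = IE := mul_one IE
  -- support
  have hsupport : ∀ m x, 1 < ‖x‖ → u m x = 0 := fun m x hx =>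
    heatT_zero_outside μ hμ hβ hC₀ ht hrad hlow hψcont hψadd hψnorm hψtriv
      (hF m).1 (hF m).2.1 hψnontriv x hx
  -- equicontinuity
  have hequi : ∀ m (M : ℕ) (x x' : Fin n → ℚ_[p]), ‖x - x'‖ ≤ ((p:ℝ) ^ M)⁻¹ →
      ‖u m x - u m x'‖ ≤ 2 * tl M := by
    intro m M x x' hxx
    refine (heatT_diff_le μ hμ hβ hC₀ ht hrad hlow hψcont hψadd hψnorm hψtriv
      (hF m).1 (hF m).2.1 M hxx).trans ?_
    have h2 : 2 * (∫ z, ‖F m z‖ ∂μ) ≤ 2 := by linarith [hL1 m]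
    exact mul_le_mul_of_nonneg_right h2 (htl0 M)
  -- continuity
  have hcont : ∀ m, Continuous (u m) := fun m =>
    heatT_continuous μ hμ hβ hC₀ ht hrad hlow hψcont hψadd hψnorm hψtriv
      (hF m).1 (hF m).2.1
  -- dense sequence
  obtain ⟨d, hd⟩ := TopologicalSpace.exists_dense_seq (Fin n → ℚ_[p])
  -- compactness in the product space
  set K : Set (ℕ → ℂ) := Set.univ.pi fun _ => closedBall (0:ℂ) IE with hK
  have hKcomp : IsCompact K := isCompact_univ_pi fun _ => isCompact_closedBall _ _
  set v : ℕ → ℕ → ℂ := fun m k => u m (d k) with hv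
  have hvK : ∀ m, v m ∈ K := by
    intro m
    refine Set.mem_univ_pi.mpr fun k => ?_
    rw [mem_closedBall, dist_zero_right]
    exact hbound m (d k)
  obtain ⟨w, _, φ, hφ, hconv⟩ := hKcomp.tendsto_subseq hvK
  have hcoord : ∀ k, Tendsto (fun j => u (φ j) (d k)) atTop (𝓝 (w k)) := by
    intro k
    have := tendsto_pi_nhds.mp hconv k
    exact this
  -- uniform Cauchy property
  have hUC : ∀ ε : ℝ, 0 < ε → ∃ J : ℕ, ∀ j ≥ J, ∀ j' ≥ J, ∀ x,
      ‖u (φ j) x - u (φ j') x‖ ≤ ε := by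
    intro ε hε
    -- choose M with 2 * tl M ≤ ε / 3
    have h3 : Tendsto (fun M => 2 * tl M) atTop (𝓝 (2 * 0)) := tendsto_const_nhds.mul htltend
    rw [mul_zero] at h3
    obtain ⟨M, hM⟩ := (h3.eventually (eventually_le_nhds (by positivity : (0:ℝ) < ε/3))).exists
    have hrpos : (0:ℝ) < ((p:ℝ) ^ M)⁻¹ := by positivity
    -- finite net of the unit ball
    have hBcomp : IsCompact (closedBall (0 : Fin n → ℚ_[p]) 1) := isCompact_closedBall _ _
    obtain ⟨s, hsB, hsfin, hscov⟩ := totallyBounded_iff_subset.mp hBcomp.totallyBounded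
      _ (Metric.dist_mem_uniformity hrpos)
    -- for each net point pick a nearby point of the dense sequence
    have hknear : ∀ y : Fin n → ℚ_[p], ∃ k, dist y (d k) < ((p:ℝ) ^ M)⁻¹ :=
      fun y => Metric.denseRange_iff.mp hd y _ hrpos
    choose kf hkf using hknear
    -- convergence at the relevant coordinates gives a Cauchy property
    have hcau : ∀ y : Fin n → ℚ_[p], ∃ N : ℕ, ∀ j ≥ N, ∀ j' ≥ N,
        dist (u (φ j) (d (kf y))) (u (φ j') (d (kf y))) < ε / 3 := by
      intro y
      have := (hcoord (kf y)).cauchySeq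
      exact Metric.cauchySeq_iff.mp this (ε/3) (by positivity)
    choose N hN using hcau
    refine ⟨hsfin.toFinset.sup N, fun j hj j' hj' x => ?_⟩
    by_cases hxB : x ∈ closedBall (0 : Fin n → ℚ_[p]) 1
    · obtain ⟨y, hys, hxy⟩ := Set.mem_iUnion₂.mp (hscov hxB)
      have hxy' : dist x y < ((p:ℝ) ^ M)⁻¹ := hxy
      have hxkf : ‖x - d (kf y)‖ ≤ ((p:ℝ) ^ M)⁻¹ := by
        have heq : x - d (kf y) = (x - y) + (y - d (kf y)) := by abel
        rw [heq]
        refine (pi_norm_add_le_max _ _).trans ?_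
        rw [← dist_eq_norm, ← dist_eq_norm]
        exact max_le hxy'.le (hkf y).le
      have hJy : N y ≤ hsfin.toFinset.sup N :=
        Finset.le_sup (hsfin.mem_toFinset.mpr hys)
      have hmid : dist (u (φ j) (d (kf y))) (u (φ j') (d (kf y))) < ε / 3 :=
        hN y j (le_trans hJy hj) j' (le_trans hJy hj')
      calc ‖u (φ j) x - u (φ j') x‖
          ≤ ‖u (φ j) x - u (φ j) (d (kf y))‖
            + ‖u (φ j) (d (kf y)) - u (φ j') (d (kf y))‖
            + ‖u (φ j') (d (kf y)) - u (φ j') x‖ := by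
              rw [← dist_eq_norm, ← dist_eq_norm, ← dist_eq_norm, ← dist_eq_norm]
              exact dist_triangle4 _ _ _ _
        _ ≤ 2 * tl M + ε/3 + 2 * tl M := by
            gcongr
            · exact hequi (φ j) M x (d (kf y)) hxkf
            · rw [← dist_eq_norm]; exact hmid.le
            · have : ‖u (φ j') (d (kf y)) - u (φ j') x‖ = ‖u (φ j') x - u (φ j') (d (kf y))‖ :=
                norm_sub_rev _ _
              rw [this]
              exact hequi (φ j') M x (d (kf y)) hxkf
        _ ≤ ε/3 + ε/3 + ε/3 := by gcongr
        _ = ε := by ring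
    · have hx1 : 1 < ‖x‖ := by
        rw [mem_closedBall, dist_zero_right, not_le] at hxB
        exact hxB
      rw [hsupport (φ j) x hx1, hsupport (φ j') x hx1, sub_zero, norm_zero]
      exact hε.le
  -- pointwise limit
  have hptcau : ∀ x, CauchySeq fun j => u (φ j) x := by
    intro x
    rw [Metric.cauchySeq_iff]
    intro ε hε
    obtain ⟨J, hJ⟩ := hUC (ε/2) (by positivity)
    refine ⟨J, fun j hj j' hj' => ?_⟩
    rw [dist_eq_norm]
    exact lt_of_le_of_lt (hJ j hj j' hj' x) (by linarith)
  have hexists : ∀ x, ∃ l : ℂ, Tendsto (fun j => u (φ j) x) atTop (𝓝 l) :=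
    fun x => cauchySeq_tendsto_of_complete (hptcau x)
  choose hfun hlim using hexists
  -- uniform convergence to hfun
  have hUconv : ∀ ε : ℝ, 0 < ε → ∃ J : ℕ, ∀ j ≥ J, ∀ x, ‖u (φ j) x - hfun x‖ ≤ ε := by
    intro ε hε
    obtain ⟨J, hJ⟩ := hUC ε hε
    refine ⟨J, fun j hj x => ?_⟩
    have h1 : Tendsto (fun j' => ‖u (φ j) x - u (φ j') x‖) atTop
        (𝓝 ‖u (φ j) x - hfun x‖) := (tendsto_const_nhds.sub (hlim x)).norm
    refine le_of_tendsto h1 ?_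
    filter_upwards [eventually_ge_atTop J] with j' hj'
    exact hJ j hj j' hj' x
  -- properties of hfun
  have hfun_supp : ∀ x, 1 < ‖x‖ → hfun x = 0 := by
    intro x hx
    have h0 : Tendsto (fun j => u (φ j) x) atTop (𝓝 0) := by
      have : (fun j => u (φ j) x) = fun _ => (0:ℂ) := by
        funext j; exact hsupport (φ j) x hx
      rw [this]; exact tendsto_const_nhds
    exact tendsto_nhds_unique (hlim x) h0
  have hfun_bound : ∀ x, ‖hfun x‖ ≤ IE := by
    intro x
    refine le_of_tendsto (hlim x).norm ?_
    exact Eventually.of_forall fun j => hbound (φ j) x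
  have hfun_meas : AEStronglyMeasurable hfun μ :=
    aestronglyMeasurable_of_tendsto_ae atTop
      (fun j => (hcont (φ j)).aestronglyMeasurable)
      (Eventually.of_forall hlim)
  have hfun_mem : MemLp hfun 2 μ := by
    refine ⟨hfun_meas, ?_⟩
    calc eLpNorm hfun 2 μ ≤ ENNReal.ofReal IE :=
          eLpNorm_le_of_bound_support μ hμ hfun_bound hfun_supp
      _ < ⊤ := ENNReal.ofReal_lt_top
  refine ⟨φ, hfun, hφ, hfun_mem, ?_⟩
  rw [ENNReal.tendsto_nhds_zero]
  intro ε hε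
  rcases eq_or_ne ε ⊤ with rfl | hεtop
  · exact Eventually.of_forall fun j => le_top
  · have hεr : (0:ℝ) < ε.toReal := ENNReal.toReal_pos (ne_of_gt hε) hεtop
    obtain ⟨J, hJ⟩ := hUconv ε.toReal hεr
    filter_upwards [eventually_ge_atTop J] with j hj
    have hb : ∀ x, ‖u (φ j) x - hfun x‖ ≤ ε.toReal := hJ j hj
    have hsupp2 : ∀ x, 1 < ‖x‖ → u (φ j) x - hfun x = 0 := by
      intro x hx
      rw [hsupport (φ j) x hx, hfun_supp x hx, sub_zero]
    calc eLpNorm (fun x => u (φ j) x - hfun x) 2 μ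
        ≤ ENNReal.ofReal ε.toReal := eLpNorm_le_of_bound_support μ hμ hb hsupp2
      _ = ε := ENNReal.ofReal_toReal hεtop

end Compact
end Aux
end PadicHeat

/-- For `t > 0` the operator `T(t) : L²₀(ℤ_p^n) → L²₀(ℤ_p^n)` is compact
(every sequence in the unit ball of `L²₀` has a subsequence whose image converges in `L²`),
self-adjoint (`⟨T(t)f, g⟩ = ⟨f, T(t)g⟩`) and non-negative (`⟨T(t)f, f⟩ ≥ 0`). -/
theorem heat_semigroup_compact_selfadjoint_nonneg {p n : ℕ} [Fact p.Prime] (hn : 0 < n)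
    (μ : Measure (Fin n → ℚ_[p])) [μ.IsAddHaarMeasure]
    (hμ : μ (closedBall (0 : Fin n → ℚ_[p]) 1) = 1)
    (β C₀ C₁ : ℝ) (hβ : 0 < β) (hC₀ : 0 < C₀) (hC₁ : 0 < C₁)
    (A : (Fin n → ℚ_[p]) → ℝ) (g : ℝ → ℝ)
    (hrad : ∀ ξ : Fin n → ℚ_[p], A ξ = g ‖ξ‖)
    (hlow : ∀ ξ : Fin n → ℚ_[p], C₀ * ‖ξ‖ ^ β ≤ A ξ)
    (hupp : ∀ ξ : Fin n → ℚ_[p], A ξ ≤ C₁ * ‖ξ‖ ^ β)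
    (ψ : ℚ_[p] → ℂ) (hψcont : Continuous ψ)
    (hψadd : ∀ a b : ℚ_[p], ψ (a + b) = ψ a * ψ b)
    (hψnorm : ∀ a : ℚ_[p], ‖ψ a‖ = 1)
    (hψtriv : ∀ a : ℚ_[p], ‖a‖ ≤ 1 → ψ a = 1)
    (hψnontriv : ∃ a : ℚ_[p], ‖a‖ ≤ p ∧ ψ a ≠ 1)
    (t : ℝ) (ht : 0 < t) :
    -- compactness
    (∀ F : ℕ → (Fin n → ℚ_[p]) → ℂ, (∀ m, MemL20 μ (F m)) →
      (∀ m, eLpNorm (F m) 2 μ ≤ 1) →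
      ∃ (φ : ℕ → ℕ) (h : (Fin n → ℚ_[p]) → ℂ), StrictMono φ ∧ MemLp h 2 μ ∧
        Tendsto (fun j => eLpNorm (fun x => heatT μ ψ A t (F (φ j)) x - h x) 2 μ)
          atTop (nhds 0)) ∧
    -- self-adjointness
    (∀ f h : (Fin n → ℚ_[p]) → ℂ, MemL20 μ f → MemL20 μ h →
      (∫ x, heatT μ ψ A t f x * (starRingEnd ℂ) (h x) ∂μ) =
        ∫ x, f x * (starRingEnd ℂ) (heatT μ ψ A t h x) ∂μ) ∧
    -- non-negativity
    (∀ f : (Fin n → ℚ_[p]) → ℂ, MemL20 μ f →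
      0 ≤ (∫ x, heatT μ ψ A t f x * (starRingEnd ℂ) (f x) ∂μ).re ∧
      (∫ x, heatT μ ψ A t f x * (starRingEnd ℂ) (f x) ∂μ).im = 0) := by
  refine ⟨?_, ?_, ?_⟩
  · intro F hF hFnorm
    exact PadicHeat.Aux.heatT_compact μ hμ hβ hC₀ ht hrad hlow hψcont hψadd hψnorm hψtriv
      hψnontriv F hF hFnorm
  · intro f h hf hh
    exact PadicHeat.Aux.heatT_selfadjoint μ hμ hβ hC₀ ht hrad hlow hψcont hψadd hψnorm
      hψtriv hf.1 hf.2.1 hh.1 hh.2.1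
  · intro f hf
    exact PadicHeat.Aux.heatT_nonneg μ hμ hβ hC₀ ht hrad hlow hψcont hψadd hψnorm hψtriv
      hf.1 hf.2.1
end

section
/- For every s ∈ ℂ with Re(s) > max{1, n/β}, the Mellin transform identity ∫_0^∞ t^{s−1} ( ∫_{ℚ_p^n∖ℤ_p^n} e^{−t A(ξ)} dⁿξ ) dt = Γ(s) · ζ(s;A_β) holds, where Γ is the Gamma function, and both sides converge absolutely. -/
open MeasureTheory Filter Topology Metric
open scoped ENNReal NNReal

section AuxLemmas

lemma aux_exp_le {K : ℕ} {y : ℝ} (hy : 0 < y) : Real.exp (-y) ≤ ((K : ℝ) / y) ^ K := by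
  rcases Nat.eq_zero_or_pos K with hK | hK
  · subst hK
    have h : Real.exp (-y) ≤ 1 := Real.exp_le_one_iff.mpr (by linarith)
    simpa using h
  · have hK0 : (0:ℝ) < K := by exact_mod_cast hK
    have h2 : y / K ≤ Real.exp (y / K) := by
      have := Real.add_one_le_exp (y / K); linarith
    have h1 : (y / K) ^ K ≤ Real.exp y := by
      calc (y / K) ^ K ≤ (Real.exp (y / K)) ^ K := pow_le_pow_left₀ (by positivity) h2 K
        _ = Real.exp y := by
            rw [← Real.exp_nat_mul]; congr 1; field_simp
    rw [Real.exp_neg]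
    calc (Real.exp y)⁻¹ ≤ ((y / K) ^ K)⁻¹ := by
          apply inv_anti₀ (by positivity) h1
      _ = ((K : ℝ) / y) ^ K := by rw [← inv_pow, inv_div]

lemma aux_summable_exp {D R b : ℝ} (hD : 0 ≤ D) (hR : 1 < R) (hb : 0 < b) :
    Summable fun m : ℕ => D ^ (m + 1) * Real.exp (-(b * R ^ (m + 1))) := by
  obtain ⟨K, hK⟩ := pow_unbounded_of_one_lt D hR
  have hRpos : (0:ℝ) < R := lt_trans one_pos hR
  have hr0 : (0:ℝ) ≤ D / R ^ K := by positivity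
  have hr1 : D / R ^ K < 1 := (div_lt_one (by positivity)).2 hK
  refine Summable.of_nonneg_of_le (fun m => by positivity) (fun m => ?_)
    ((summable_geometric_of_lt_one hr0 hr1).mul_left (((K:ℝ)/b)^K * (D / R^K)))
  have h1 : Real.exp (-(b * R ^ (m+1))) ≤ ((K:ℝ) / (b * R^(m+1)))^K := aux_exp_le (by positivity)
  calc D^(m+1) * Real.exp (-(b * R^(m+1))) ≤ D^(m+1) * ((K:ℝ) / (b * R^(m+1)))^K :=
        mul_le_mul_of_nonneg_left h1 (by positivity)
    _ = (((K:ℝ)/b)^K * (D / R^K)) * (D/R^K)^m := by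
        rw [div_pow, div_pow, div_pow, mul_pow]
        rw [show (R^(m+1))^K = (R^K)^(m+1) by rw [← pow_mul, ← pow_mul, Nat.mul_comm]]
        field_simp
        ring

lemma padic_digit {p : ℕ} [hp : Fact p.Prime] (k : ℕ) (z : ℚ_[p]) (hz : ‖z‖ ≤ (p:ℝ)^(k+1)) :
    ∃! c : Fin p, ‖z - ((c : ℕ) : ℚ_[p]) * ((p:ℚ_[p])⁻¹)^(k+1)‖ ≤ (p:ℝ)^k := by
  have hp1 : (1:ℝ) < p := by exact_mod_cast hp.out.one_lt
  have hpR : (0:ℝ) < p := lt_trans one_pos hp1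
  have hpQ : (p : ℚ_[p]) ≠ 0 := Nat.cast_ne_zero.mpr hp.out.ne_zero
  set v : ℚ_[p] := ((p:ℚ_[p])⁻¹)^(k+1) with hv
  have hnv : ‖v‖ = (p:ℝ)^(k+1) := by
    rw [hv, norm_pow, norm_inv, Padic.norm_p, inv_inv]
  have hinv : (p:ℚ_[p])^(k+1) * v = 1 := by
    rw [hv, ← mul_pow, mul_inv_cancel₀ hpQ, one_pow]
  have hzv : (z * (p:ℚ_[p])^(k+1)) * v = z := by
    rw [mul_assoc, hinv, mul_one]
  have hpk1 : (p:ℝ)⁻¹ * (p:ℝ)^(k+1) = (p:ℝ)^k := by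
    rw [pow_succ, mul_comm ((p:ℝ)^k) (p:ℝ), ← mul_assoc, inv_mul_cancel₀ (ne_of_gt hpR), one_mul]
  have hw : ‖z * (p:ℚ_[p])^(k+1)‖ ≤ 1 := by
    rw [norm_mul, norm_pow, Padic.norm_p]
    calc ‖z‖ * ((p:ℝ)⁻¹)^(k+1) ≤ (p:ℝ)^(k+1) * ((p:ℝ)⁻¹)^(k+1) :=
          mul_le_mul_of_nonneg_right hz (by positivity)
      _ = 1 := by rw [← mul_pow, mul_inv_cancel₀ (ne_of_gt hpR), one_pow]
  set W : ℤ_[p] := ⟨z * (p:ℚ_[p])^(k+1), hw⟩ with hW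
  have hlt : W.appr 1 < p := by simpa using PadicInt.appr_lt W 1
  have hspec := (PadicInt.norm_le_pow_iff_mem_span_pow (W - ((W.appr 1 : ℕ) : ℤ_[p])) 1).mpr
    (by simpa using PadicInt.appr_spec 1 W)
  simp only [Nat.cast_one, zpow_neg, zpow_one] at hspec
  have hQspec : ‖z * (p:ℚ_[p])^(k+1) - ((W.appr 1 : ℕ) : ℚ_[p])‖ ≤ (p:ℝ)⁻¹ := by
    have hcoe : ((W - ((W.appr 1 : ℕ) : ℤ_[p]) : ℤ_[p]) : ℚ_[p])
        = z * (p:ℚ_[p])^(k+1) - ((W.appr 1 : ℕ) : ℚ_[p]) := by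
      push_cast
      rfl
    rw [PadicInt.norm_def, hcoe] at hspec
    exact hspec
  have hbound : ‖z - ((W.appr 1 : ℕ) : ℚ_[p]) * v‖ ≤ (p:ℝ)^k := by
    have heq : z - ((W.appr 1 : ℕ) : ℚ_[p]) * v
        = (z * (p:ℚ_[p])^(k+1) - ((W.appr 1 : ℕ):ℚ_[p])) * v := by
      rw [sub_mul, hzv]
    rw [heq, norm_mul, hnv, ← hpk1]
    exact mul_le_mul_of_nonneg_right hQspec (by positivity)
  refine ⟨⟨W.appr 1, hlt⟩, hbound, ?_⟩
  intro b hb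
  have ha : ‖z - ((W.appr 1 : ℕ) : ℚ_[p]) * v‖ ≤ (p:ℝ)^k := hbound
  set a : Fin p := ⟨W.appr 1, hlt⟩
  have hdiff : ‖(((b:ℕ):ℚ_[p]) - ((a:ℕ):ℚ_[p])) * v‖ ≤ (p:ℝ)^k := by
    have hrw : (((b:ℕ):ℚ_[p]) - ((a:ℕ):ℚ_[p])) * v
        = (z - ((a:ℕ):ℚ_[p]) * v) + (-(z - ((b:ℕ):ℚ_[p]) * v)) := by ring
    rw [hrw]
    refine le_trans (Padic.nonarchimedean _ _) (max_le ha ?_)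
    rwa [norm_neg]
  rw [norm_mul, hnv, ← hpk1] at hdiff
  have hppos : (0:ℝ) < (p:ℝ)^(k+1) := by positivity
  have hle : ‖((b:ℕ):ℚ_[p]) - ((a:ℕ):ℚ_[p])‖ ≤ (p:ℝ)⁻¹ :=
    le_of_mul_le_mul_right hdiff hppos
  have hlt1 : ‖((b:ℕ):ℚ_[p]) - ((a:ℕ):ℚ_[p])‖ < 1 :=
    lt_of_le_of_lt hle (by rw [inv_lt_one_iff₀]; right; exact hp1)
  have hdvd : (p:ℤ) ∣ ((b:ℕ):ℤ) - ((a:ℕ):ℤ) := by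
    rw [← Padic.norm_intCast_lt_one_iff]
    push_cast
    exact hlt1
  have habs : |((b:ℕ):ℤ) - ((a:ℕ):ℤ)| < (p:ℤ) := by
    have h1 : ((a:ℕ):ℤ) < p := by exact_mod_cast a.2
    have h2 : ((b:ℕ):ℤ) < p := by exact_mod_cast b.2
    have h3 : (0:ℤ) ≤ ((a:ℕ):ℤ) := by positivity
    have h4 : (0:ℤ) ≤ ((b:ℕ):ℤ) := by positivity
    rw [abs_lt]; omega
  have h0 := Int.eq_zero_of_abs_lt_dvd hdvd habs
  have hba : ((b:ℕ):ℤ) = ((a:ℕ):ℤ) := by omega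
  exact Fin.ext (by exact_mod_cast hba)

lemma measure_ball_pow {p n : ℕ} [hp : Fact p.Prime] (μ : Measure (Fin n → ℚ_[p]))
    [μ.IsAddHaarMeasure] (hμ : μ (closedBall (0 : Fin n → ℚ_[p]) 1) = 1) (k : ℕ) :
    μ (closedBall (0 : Fin n → ℚ_[p]) ((p:ℝ)^k)) = ((p : ℝ≥0∞))^(k*n) := by
  have hp1 : (1:ℝ) < p := by exact_mod_cast hp.out.one_lt
  have hpR : (0:ℝ) < p := lt_trans one_pos hp1
  induction k with
  | zero => simpa using hμ
  | succ k ih =>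
    set v : (Fin n → Fin p) → (Fin n → ℚ_[p]) :=
      fun c i => ((c i : ℕ) : ℚ_[p]) * ((p:ℚ_[p])⁻¹)^(k+1) with hvdef
    set T : (Fin n → Fin p) → Set (Fin n → ℚ_[p]) :=
      fun c => (fun x => -(v c) + x) ⁻¹' (closedBall 0 ((p:ℝ)^k)) with hTdef
    have hTmem : ∀ c x, x ∈ T c ↔ ∀ i, ‖x i - v c i‖ ≤ (p:ℝ)^k := by
      intro c x
      rw [hTdef]
      simp only [Set.mem_preimage, mem_closedBall_zero_iff, neg_add_eq_sub]
      rw [pi_norm_le_iff_of_nonneg (by positivity)]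
      exact forall_congr' fun i => by rw [Pi.sub_apply]
    have hvnorm : ∀ c i, ‖v c i‖ ≤ (p:ℝ)^(k+1) := by
      intro c i
      rw [hvdef]
      simp only
      rw [norm_mul, norm_pow, norm_inv, Padic.norm_p, inv_inv]
      have h1 : ‖((c i : ℕ) : ℚ_[p])‖ ≤ 1 := by
        have := Padic.norm_int_le_one (p := p) ((c i : ℕ) : ℤ)
        push_cast at this
        exact this
      exact mul_le_of_le_one_left (by positivity) h1
    have hTsub : ∀ c, T c ⊆ closedBall 0 ((p:ℝ)^(k+1)) := by
      intro c x hx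
      rw [hTmem] at hx
      rw [mem_closedBall_zero_iff, pi_norm_le_iff_of_nonneg (by positivity)]
      intro i
      have hxi : x i = (x i - v c i) + v c i := by ring
      rw [hxi]
      refine le_trans (Padic.nonarchimedean _ _) (max_le ?_ (hvnorm c i))
      exact le_trans (hx i) (pow_le_pow_right₀ hp1.le (Nat.le_succ k))
    have hcover : closedBall (0 : Fin n → ℚ_[p]) ((p:ℝ)^(k+1)) = ⋃ c, T c := by
      apply Set.Subset.antisymm
      · intro x hx
        rw [mem_closedBall_zero_iff] at hx
        have hxi : ∀ i, ‖x i‖ ≤ (p:ℝ)^(k+1) := fun i => le_trans (norm_le_pi_norm x i) hx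
        have hdig := fun i => (padic_digit k (x i) (hxi i)).exists
        choose c hc using hdig
        exact Set.mem_iUnion.2 ⟨c, (hTmem c x).2 hc⟩
      · exact Set.iUnion_subset hTsub
    have hTmeas : ∀ c, MeasurableSet (T c) :=
      fun c => (continuous_const.add continuous_id).measurable measurableSet_closedBall
    have hTdisj : Pairwise (Function.onFun Disjoint T) := by
      intro c c' hne
      rw [Function.onFun, Set.disjoint_left]
      intro x hxc hxc'
      apply hne
      funext i
      have h1 := (hTmem c x).1 hxc
      have h2 := (hTmem c' x).1 hxc'
      have hxi : ‖x i‖ ≤ (p:ℝ)^(k+1) := le_trans (norm_le_pi_norm x i) <| by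
        rw [← mem_closedBall_zero_iff]; exact hTsub c hxc
      exact (padic_digit k (x i) hxi).unique (h1 i) (h2 i)
    have hTμ : ∀ c, μ (T c) = μ (closedBall (0 : Fin n → ℚ_[p]) ((p:ℝ)^k)) :=
      fun c => measure_preimage_add μ _ _
    rw [hcover, measure_iUnion hTdisj hTmeas]
    rw [tsum_congr (fun c => (hTμ c).trans ih), tsum_fintype]
    rw [Finset.sum_const, nsmul_eq_mul]
    have hcard : (Fintype.card (Fin n → Fin p)) = p ^ n := by
      simp [Fintype.card_fun]
    rw [Finset.card_univ, hcard]
    push_cast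
    rw [← pow_add]
    congr 1
    ring

lemma integrable_tsum_of_summable_norm' {α : Type*} [MeasurableSpace α] {μ : Measure α}
    {F : ℕ → α → ℂ} (hF_int : ∀ i, Integrable (F i) μ)
    (hF_sum : Summable fun i => ∫ a, ‖F i a‖ ∂μ) :
    Integrable (fun a => ∑' i, F i a) μ := by
  have hf'' : ∀ i, AEMeasurable (fun x => (‖F i x‖₊ : ℝ≥0∞)) μ := fun i => (hF_int i).1.enorm
  have hfin : ∑' i, ∫⁻ a, (‖F i a‖₊ : ℝ≥0∞) ∂μ ≠ ∞ := by
    have heq : ∀ i, ∫⁻ a, (‖F i a‖₊ : ℝ≥0∞) ∂μ = ENNReal.ofReal (∫ a, ‖F i a‖ ∂μ) := fun i =>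
      (ofReal_integral_norm_eq_lintegral_enorm (hF_int i)).symm
    rw [tsum_congr heq,
      ← ENNReal.ofReal_tsum_of_nonneg (fun i => integral_nonneg fun a => norm_nonneg _) hF_sum]
    exact ENNReal.ofReal_ne_top
  have hlt : ∫⁻ a, ∑' i, (‖F i a‖₊ : ℝ≥0∞) ∂μ ≠ ∞ := by
    rw [lintegral_tsum hf'']; exact hfin
  have hae : ∀ᵐ a ∂μ, Summable fun i => ‖F i a‖ := by
    refine (ae_lt_top' (AEMeasurable.ennreal_tsum hf'') hlt).mono fun a ha => ?_
    have hne : ∑' i, ((‖F i a‖₊ : ℝ≥0) : ℝ≥0∞) ≠ ⊤ := ha.ne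
    rw [ENNReal.tsum_coe_ne_top_iff_summable_coe] at hne
    simpa [coe_nnnorm] using hne
  constructor
  · refine aestronglyMeasurable_of_tendsto_ae atTop
      (f := fun N => fun a => ∑ i ∈ Finset.range N, F i a)
      (fun N => Finset.aestronglyMeasurable_fun_sum _ fun i _ => (hF_int i).1) ?_
    refine hae.mono fun a ha => ?_
    exact ha.of_norm.hasSum.tendsto_sum_nat
  · dsimp [HasFiniteIntegral]
    refine lt_of_le_of_lt (lintegral_mono_ae (hae.mono fun a ha => ?_)) hlt.lt_top
    calc (‖∑' i, F i a‖₊ : ℝ≥0∞) = ENNReal.ofReal ‖∑' i, F i a‖ := by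
          exact (ofReal_norm _).symm
      _ ≤ ENNReal.ofReal (∑' i, ‖F i a‖) :=
          ENNReal.ofReal_le_ofReal (norm_tsum_le_tsum_norm ha)
      _ = ∑' i, (‖F i a‖₊ : ℝ≥0∞) := by
          rw [ENNReal.ofReal_tsum_of_nonneg (fun i => norm_nonneg _) ha]
          exact tsum_congr fun i => ofReal_norm _

end AuxLemmas

/-- For `Re(s) > max{1, n/β}` the Mellin transform identity
`∫_0^∞ t^{s−1} (∫_{ℚ_p^n∖ℤ_p^n} e^{−tA(ξ)} dⁿξ) dt = Γ(s) ζ(s;A_β)` holds, and both sides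
converge absolutely. -/
theorem mellin_transform_of_heat_trace {p n : ℕ} [Fact p.Prime] (hn : 0 < n)
    (μ : Measure (Fin n → ℚ_[p])) [μ.IsAddHaarMeasure]
    (hμ : μ (closedBall (0 : Fin n → ℚ_[p]) 1) = 1)
    (β C₀ C₁ : ℝ) (hβ : 0 < β) (hC₀ : 0 < C₀) (hC₁ : 0 < C₁)
    (A : (Fin n → ℚ_[p]) → ℝ) (g : ℝ → ℝ)
    (hrad : ∀ ξ : Fin n → ℚ_[p], A ξ = g ‖ξ‖)
    (hlow : ∀ ξ : Fin n → ℚ_[p], C₀ * ‖ξ‖ ^ β ≤ A ξ)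
    (hupp : ∀ ξ : Fin n → ℚ_[p], A ξ ≤ C₁ * ‖ξ‖ ^ β)
    (s : ℂ) (hs : max 1 ((n : ℝ) / β) < s.re) :
    IntegrableOn
      (fun t : ℝ => (t : ℂ) ^ (s - 1) *
        ((∫ ξ in {ξ : Fin n → ℚ_[p] | 1 < ‖ξ‖}, Real.exp (-(t * A ξ)) ∂μ : ℝ) : ℂ))
      (Set.Ioi (0 : ℝ)) ∧
    Summable (fun m : ℕ =>
      ‖(p : ℂ) ^ ((m + 1) * n) * (1 - (p : ℂ) ^ (-(n : ℤ))) *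
        (g ((p : ℝ) ^ (m + 1)) : ℂ) ^ (-s)‖) ∧
    (∫ t in Set.Ioi (0 : ℝ), (t : ℂ) ^ (s - 1) *
        ((∫ ξ in {ξ : Fin n → ℚ_[p] | 1 < ‖ξ‖}, Real.exp (-(t * A ξ)) ∂μ : ℝ) : ℂ)) =
      Complex.Gamma s *
        ∑' m : ℕ, (p : ℂ) ^ ((m + 1) * n) * (1 - (p : ℂ) ^ (-(n : ℤ))) *
          (g ((p : ℝ) ^ (m + 1)) : ℂ) ^ (-s) := by
  classical
  have hprime : p.Prime := Fact.out
  have hp1 : (1:ℝ) < p := by exact_mod_cast hprime.one_lt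
  have hpR : (0:ℝ) < p := lt_trans one_pos hp1
  have hpC : (p : ℂ) ≠ 0 := Nat.cast_ne_zero.mpr hprime.ne_zero
  have hσ1 : 1 < s.re := lt_of_le_of_lt (le_max_left _ _) hs
  have hσ0 : 0 < s.re := lt_trans one_pos hσ1
  have hnβ : (n:ℝ) < β * s.re := by
    have h := lt_of_le_of_lt (le_max_right _ _) hs
    have h2 := (div_lt_iff₀ hβ).1 h
    linarith
  -- balls and spheres
  set B : ℕ → Set (Fin n → ℚ_[p]) := fun k => closedBall 0 ((p:ℝ)^k) with hBdef
  set Sph : ℕ → Set (Fin n → ℚ_[p]) := fun m => B (m+1) \ B m with hSdef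
  have hBmem : ∀ k x, x ∈ B k ↔ ‖x‖ ≤ (p:ℝ)^k := fun k x => mem_closedBall_zero_iff
  have hBmeas : ∀ k, MeasurableSet (B k) := fun k => measurableSet_closedBall
  have hBmono : ∀ {j k : ℕ}, j ≤ k → B j ⊆ B k := fun {j k} hjk =>
    closedBall_subset_closedBall (pow_le_pow_right₀ hp1.le hjk)
  have hμB : ∀ k, μ (B k) = (p:ℝ≥0∞)^(k*n) := measure_ball_pow μ hμ
  have hμBne : ∀ k, μ (B k) ≠ ⊤ := fun k => by
    rw [hμB]; exact ENNReal.pow_ne_top (ENNReal.natCast_ne_top p)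
  have hSmeas : ∀ m, MeasurableSet (Sph m) := fun m => (hBmeas _).diff (hBmeas _)
  have hSdisj : Pairwise (Function.onFun Disjoint Sph) := by
    have key : ∀ {i j : ℕ}, i < j → Disjoint (Sph i) (Sph j) := by
      intro i j hij
      rw [Set.disjoint_left]
      intro x hxi hxj
      exact hxj.2 (hBmono (by omega) hxi.1)
    intro i j hne
    rcases lt_or_gt_of_ne hne with h | h
    · exact key h
    · exact (key h).symm
  have hμS : ∀ m, μ (Sph m) = (p:ℝ≥0∞)^((m+1)*n) - (p:ℝ≥0∞)^(m*n) := by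
    intro m
    rw [hSdef]
    simp only
    rw [measure_diff (hBmono (Nat.le_succ m)) (hBmeas m).nullMeasurableSet (hμBne m), hμB, hμB]
  have hμSfin : ∀ m, μ (Sph m) < ⊤ := by
    intro m
    rw [hμS m]
    exact lt_of_le_of_lt tsub_le_self (ENNReal.pow_lt_top (ENNReal.natCast_lt_top p))
  set cR : ℕ → ℝ := fun m => (μ (Sph m)).toReal with hcRdef
  have hpow_le : ∀ {a b : ℕ}, a ≤ b → (p:ℝ≥0∞)^a ≤ (p:ℝ≥0∞)^b := fun {a b} hab =>
    pow_le_pow_right₀ (by exact_mod_cast hprime.one_lt.le) hab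
  have hcR : ∀ m, cR m = (p:ℝ)^((m+1)*n) - (p:ℝ)^(m*n) := by
    intro m
    rw [hcRdef]
    simp only
    rw [hμS m, ENNReal.toReal_sub_of_le (hpow_le (Nat.mul_le_mul_right n (Nat.le_succ m)))
      (ENNReal.pow_ne_top (ENNReal.natCast_ne_top p))]
    simp [ENNReal.toReal_pow]
  have hcR_nonneg : ∀ m, 0 ≤ cR m := fun m => ENNReal.toReal_nonneg
  have hcR_le : ∀ m, cR m ≤ ((p:ℝ)^n)^(m+1) := by
    intro m
    rw [hcR m, ← pow_mul, show n*(m+1) = (m+1)*n from by ring]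
    exact sub_le_self _ (by positivity)
  -- norm is constant on spheres
  have hSnorm : ∀ m ξ, ξ ∈ Sph m → ‖ξ‖ = (p:ℝ)^(m+1) := by
    intro m ξ hξ
    obtain ⟨h1, h2⟩ := hξ
    rw [hBmem] at h1
    have h2' : ¬ ‖ξ‖ ≤ (p:ℝ)^m := fun h => h2 ((hBmem m ξ).2 h)
    have h3 : ¬ ∀ i, ‖ξ i‖ ≤ (p:ℝ)^m := fun h =>
      h2' ((pi_norm_le_iff_of_nonneg (by positivity)).2 h)
    push_neg at h3
    obtain ⟨i, hi⟩ := h3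
    have hcast : (p:ℝ)^((m:ℤ)+1) = (p:ℝ)^(m+1 : ℕ) := by
      rw [← zpow_natCast (p:ℝ) (m+1)]
      congr 1
    have hge : (p:ℝ)^(m+1) ≤ ‖ξ i‖ := by
      by_contra hcon
      push_neg at hcon
      have h4 : ‖ξ i‖ ≤ (p:ℝ)^(m:ℤ) :=
        (Padic.norm_le_pow_iff_norm_lt_pow_add_one (ξ i) m).2 (by rw [hcast]; exact hcon)
      rw [zpow_natCast] at h4
      linarith
    exact le_antisymm h1 (le_trans hge (norm_le_pi_norm ξ i))
  -- the union
  have hUnion : {ξ : Fin n → ℚ_[p] | 1 < ‖ξ‖} = ⋃ m, Sph m := by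
    ext ξ
    simp only [Set.mem_setOf_eq, Set.mem_iUnion]
    constructor
    · intro hξ
      obtain ⟨N, hN⟩ := pow_unbounded_of_one_lt ‖ξ‖ hp1
      have hex : ∃ k, ‖ξ‖ ≤ (p:ℝ)^k := ⟨N, hN.le⟩
      have hk0 : ‖ξ‖ ≤ (p:ℝ)^(Nat.find hex) := Nat.find_spec hex
      have hk0ne : Nat.find hex ≠ 0 := by
        intro h
        rw [h, pow_zero] at hk0
        linarith
      obtain ⟨m, hm⟩ : ∃ m, Nat.find hex = m + 1 := ⟨Nat.find hex - 1, by omega⟩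
      refine ⟨m, ⟨(hBmem _ ξ).2 (hm ▸ hk0), fun hmem => ?_⟩⟩
      exact Nat.find_min hex (by omega) ((hBmem m ξ).1 hmem)
    · rintro ⟨m, hm1, hm2⟩
      by_contra hcon
      push_neg at hcon
      exact hm2 ((hBmem m ξ).2 (le_trans hcon (one_le_pow₀ hp1.le)))
  -- the eigenvalue sequence
  set aseq : ℕ → ℝ := fun m => g ((p:ℝ)^(m+1)) with haseq
  have hpoint : ∀ m : ℕ, ∃ ξ : Fin n → ℚ_[p], ‖ξ‖ = (p:ℝ)^(m+1) := by
    intro m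
    have : Nonempty (Fin n) := ⟨⟨0, hn⟩⟩
    refine ⟨fun _ => ((p:ℚ_[p])⁻¹)^(m+1), ?_⟩
    rw [pi_norm_const, norm_pow, norm_inv, Padic.norm_p, inv_inv]
  have ha_low : ∀ m, C₀ * ((p:ℝ)^(m+1))^β ≤ aseq m := by
    intro m
    obtain ⟨ξ, hξ⟩ := hpoint m
    calc C₀ * ((p:ℝ)^(m+1))^β = C₀ * ‖ξ‖^β := by rw [hξ]
      _ ≤ A ξ := hlow ξ
      _ = aseq m := by rw [hrad ξ, hξ, haseq]
  have ha_pos : ∀ m, 0 < aseq m := fun m =>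
    lt_of_lt_of_le (by positivity) (ha_low m)
  have hAconst : ∀ m ξ, ξ ∈ Sph m → A ξ = aseq m := by
    intro m ξ hξ
    rw [hrad ξ, hSnorm m ξ hξ, haseq]
  -- rpow bridging
  have hbr : ∀ (y : ℝ) (m : ℕ), (((p:ℝ)^(m+1) : ℝ))^y = ((p:ℝ)^y)^(m+1) := by
    intro y m
    rw [← Real.rpow_natCast (p:ℝ) (m+1), ← Real.rpow_mul hpR.le, mul_comm,
        Real.rpow_mul hpR.le, Real.rpow_natCast]
  have hRβ : 1 < (p:ℝ)^β := (Real.one_lt_rpow_iff_of_pos hpR).2 (Or.inl ⟨hp1, hβ⟩)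
  -- heat-trace decomposition at fixed t > 0
  have hHeat : ∀ t : ℝ, 0 < t →
      HasSum (fun m => cR m * Real.exp (-(t * aseq m)))
        (∫ ξ in ⋃ m, Sph m, Real.exp (-(t * A ξ)) ∂μ) := by
    intro t ht
    have hconst : ∀ m, Set.EqOn (fun _ : (Fin n → ℚ_[p]) => Real.exp (-(t * aseq m)))
        (fun ξ => Real.exp (-(t * A ξ))) (Sph m) := by
      intro m ξ hξ
      simp only
      rw [hAconst m ξ hξ]
    have hint : ∀ m, IntegrableOn (fun ξ => Real.exp (-(t * A ξ))) (Sph m) μ := by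
      intro m
      refine IntegrableOn.congr_fun ?_ (hconst m) (hSmeas m)
      exact integrableOn_const (hμSfin m).ne
    have hsummable : Summable (fun m => cR m * Real.exp (-(t * aseq m))) := by
      refine Summable.of_nonneg_of_le (fun m => by positivity) (fun m => ?_)
        (aux_summable_exp (D := (p:ℝ)^n) (R := (p:ℝ)^β) (b := t * C₀)
          (by positivity) hRβ (by positivity))
      have hexp : Real.exp (-(t * aseq m)) ≤ Real.exp (-(t * C₀ * ((p:ℝ)^β)^(m+1))) := by
        apply Real.exp_le_exp.2
        apply neg_le_neg
        rw [mul_assoc, ← hbr β m]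
        exact mul_le_mul_of_nonneg_left (ha_low m) ht.le
      exact mul_le_mul (hcR_le m) hexp (Real.exp_nonneg _) (by positivity)
    have hval : ∀ m, ∫ ξ in Sph m, ‖Real.exp (-(t * A ξ))‖ ∂μ
        = cR m * Real.exp (-(t * aseq m)) := by
      intro m
      rw [setIntegral_congr_fun (hSmeas m)
        (g := fun _ => Real.exp (-(t * aseq m)))
        (fun ξ hξ => by
          simp only
          rw [Real.norm_of_nonneg (Real.exp_nonneg _), hAconst m ξ hξ])]
      rw [setIntegral_const, smul_eq_mul]
      rfl
    have hintU : IntegrableOn (fun ξ => Real.exp (-(t * A ξ))) (⋃ m, Sph m) μ := by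
      refine integrableOn_iUnion_of_summable_integral_norm hint ?_
      exact hsummable.congr fun m => (hval m).symm
    have hHS := hasSum_integral_iUnion hSmeas hSdisj hintU
    have hval' : ∀ m, ∫ ξ in Sph m, Real.exp (-(t * A ξ)) ∂μ
        = cR m * Real.exp (-(t * aseq m)) := by
      intro m
      rw [setIntegral_congr_fun (hSmeas m)
        (g := fun _ => Real.exp (-(t * aseq m)))
        (fun ξ hξ => by simp only; rw [hAconst m ξ hξ])]
      rw [setIntegral_const, smul_eq_mul]
      rfl
    simpa only [hval'] using hHS
  -- Mellin-side term functions
  set F : ℕ → ℝ → ℂ := fun m t =>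
    (t:ℂ)^(s-1) * ((cR m : ℂ) * ((Real.exp (-(aseq m * t)) : ℝ) : ℂ)) with hFdef
  -- per-term integrability
  have hJ : ∀ b : ℝ, 0 < b →
      IntegrableOn (fun t : ℝ => (t:ℂ)^(s-1) * ((Real.exp (-(b*t)) : ℝ) : ℂ)) (Set.Ioi 0) := by
    intro b hb
    have h0 := Complex.GammaIntegral_convergent hσ0
    rw [← mul_zero b, ← integrableOn_Ioi_comp_mul_left_iff _ _ hb] at h0
    have hBne : ((b:ℝ):ℂ)^(s-1) ≠ 0 := by
      rw [Ne, Complex.cpow_eq_zero_iff, not_and_or]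
      exact Or.inl (Complex.ofReal_ne_zero.mpr hb.ne')
    refine IntegrableOn.congr_fun (h0.const_mul (1 / ((b:ℝ):ℂ) ^ (s - 1)))
      (fun t ht => ?_) measurableSet_Ioi
    have ht' : (0:ℝ) < t := ht
    simp only [Complex.ofReal_exp]
    push_cast
    rw [Complex.mul_cpow_ofReal_nonneg hb.le ht'.le]
    field_simp
  have hFint : ∀ m, Integrable (F m) (volume.restrict (Set.Ioi 0)) := by
    intro m
    refine ((hJ (aseq m) (ha_pos m)).const_mul ((cR m : ℂ))).congr
      (Filter.Eventually.of_forall fun t => ?_)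
    rw [hFdef]
    ring
  -- norm integrals
  have hFnorm_val : ∀ m, ∫ t in Set.Ioi (0:ℝ), ‖F m t‖
      = cR m * ((1/(aseq m))^s.re * Real.Gamma s.re) := by
    intro m
    rw [setIntegral_congr_fun measurableSet_Ioi
      (g := fun t => cR m * (t ^ (s.re - 1) * Real.exp (-(aseq m * t))))
      (fun t ht => ?_)]
    · rw [integral_const_mul, Real.integral_rpow_mul_exp_neg_mul_Ioi hσ0 (ha_pos m)]
    · have ht' : (0:ℝ) < t := ht
      simp only
      rw [norm_mul, norm_mul, Complex.norm_cpow_eq_rpow_re_of_pos ht', Complex.sub_re, Complex.one_re,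
        Complex.norm_real, Complex.norm_real, Real.norm_of_nonneg (hcR_nonneg m),
        Real.norm_of_nonneg (Real.exp_nonneg _)]
      ring
  -- zeta-side summability
  have S0 : Summable fun m => cR m * (1/(aseq m))^s.re := by
    set r : ℝ := (p:ℝ)^((n:ℝ) - β * s.re) with hrdef
    have hr0 : 0 ≤ r := Real.rpow_nonneg hpR.le _
    have hr1 : r < 1 := Real.rpow_lt_one_of_one_lt_of_neg hp1 (by linarith)
    refine Summable.of_nonneg_of_le
      (fun m => mul_nonneg (hcR_nonneg m) (Real.rpow_nonneg (one_div_nonneg.2 (ha_pos m).le) _))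
      (fun m => ?_)
      ((summable_geometric_of_lt_one hr0 hr1).mul_left ((1/C₀)^s.re * r))
    have hstep1 : (1/(aseq m)) ≤ 1/(C₀ * ((p:ℝ)^(m+1))^β) :=
      one_div_le_one_div_of_le (by positivity) (ha_low m)
    have hstep2 : (1/(aseq m))^s.re ≤ (1/(C₀ * ((p:ℝ)^(m+1))^β))^s.re :=
      Real.rpow_le_rpow (one_div_nonneg.2 (ha_pos m).le) hstep1 hσ0.le
    have hX : ((p:ℝ)^(m+1) : ℝ)^(β * s.re) = ((p:ℝ)^(β * s.re))^(m+1) := hbr _ m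
    have hstep3 : (1/(C₀ * ((p:ℝ)^(m+1))^β))^s.re
        = (1/C₀)^s.re * (((p:ℝ)^(β * s.re))^(m+1))⁻¹ := by
      rw [one_div, mul_inv, Real.mul_rpow (by positivity) (by positivity), ← one_div,
        Real.inv_rpow (by positivity), ← Real.rpow_mul (by positivity), hX]
    have hgeom : ((p:ℝ)^n)^(m+1) * (((p:ℝ)^(β * s.re))^(m+1))⁻¹ = r^(m+1) := by
      rw [hrdef, Real.rpow_sub hpR, div_pow, Real.rpow_natCast, div_eq_mul_inv]
    calc cR m * (1/(aseq m))^s.re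
        ≤ ((p:ℝ)^n)^(m+1) * ((1/C₀)^s.re * (((p:ℝ)^(β * s.re))^(m+1))⁻¹) := by
          refine mul_le_mul (hcR_le m) (hstep3 ▸ hstep2)
            (Real.rpow_nonneg (one_div_nonneg.2 (ha_pos m).le) _) (by positivity)
      _ = (1/C₀)^s.re * (((p:ℝ)^n)^(m+1) * (((p:ℝ)^(β * s.re))^(m+1))⁻¹) := by ring
      _ = (1/C₀)^s.re * r^(m+1) := by rw [hgeom]
      _ = ((1/C₀)^s.re * r) * r^m := by ring
  have hFnorm_sum : Summable fun m => ∫ t in Set.Ioi (0:ℝ), ‖F m t‖ :=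
    (S0.mul_right (Real.Gamma s.re)).congr fun m => by
      rw [hFnorm_val m, mul_assoc]
  -- pointwise identity on Ioi 0
  have hPoint : ∀ t ∈ Set.Ioi (0:ℝ), (t:ℂ)^(s-1) *
      ((∫ ξ in {ξ : Fin n → ℚ_[p] | 1 < ‖ξ‖}, Real.exp (-(t * A ξ)) ∂μ : ℝ) : ℂ)
      = ∑' m, F m t := by
    intro t ht
    rw [hUnion]
    have h2 : HasSum (fun m => ((cR m * Real.exp (-(t * aseq m)) : ℝ) : ℂ))
        ((∫ ξ in ⋃ m, Sph m, Real.exp (-(t * A ξ)) ∂μ : ℝ) : ℂ) :=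
      (hHeat t ht).mapL Complex.ofRealCLM
    have h3 := h2.mul_left ((t:ℂ)^(s-1))
    rw [← h3.tsum_eq]
    refine tsum_congr fun m => ?_
    rw [hFdef]
    simp only
    rw [show -(t * aseq m) = -(aseq m * t) by ring]
    push_cast
    ring
  -- conjunct 1
  have hIntTsum : Integrable (fun t => ∑' m, F m t) (volume.restrict (Set.Ioi 0)) :=
    integrable_tsum_of_summable_norm' hFint hFnorm_sum
  have conj1 : IntegrableOn
      (fun t : ℝ => (t : ℂ) ^ (s - 1) *
        ((∫ ξ in {ξ : Fin n → ℚ_[p] | 1 < ‖ξ‖}, Real.exp (-(t * A ξ)) ∂μ : ℝ) : ℂ))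
      (Set.Ioi (0 : ℝ)) := by
    refine hIntTsum.congr ?_
    refine (ae_restrict_iff' measurableSet_Ioi).2 (Filter.Eventually.of_forall fun t ht => ?_)
    exact (hPoint t ht).symm
  -- casting identity
  have hcast : ∀ m : ℕ, ((cR m : ℝ) : ℂ)
      = (p : ℂ) ^ ((m + 1) * n) * (1 - (p : ℂ) ^ (-(n : ℤ))) := by
    intro m
    rw [hcR m]
    push_cast
    rw [mul_sub, mul_one]
    congr 1
    rw [← zpow_natCast (p:ℂ) ((m+1)*n), ← zpow_natCast (p:ℂ) (m*n), ← zpow_add₀ hpC]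
    congr 1
    push_cast
    ring
  -- conjunct 2
  have conj2 : Summable (fun m : ℕ =>
      ‖(p : ℂ) ^ ((m + 1) * n) * (1 - (p : ℂ) ^ (-(n : ℤ))) *
        (g ((p : ℝ) ^ (m + 1)) : ℂ) ^ (-s)‖) := by
    refine S0.congr fun m => ?_
    rw [norm_mul, ← hcast m, Complex.norm_real, Real.norm_of_nonneg (hcR_nonneg m)]
    congr 1
    rw [Complex.norm_cpow_eq_rpow_re_of_pos (ha_pos m), Complex.neg_re]
    rw [Real.rpow_neg (ha_pos m).le, one_div, Real.inv_rpow (ha_pos m).le]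
  -- per-term Mellin integral
  have hFval : ∀ m, ∫ t in Set.Ioi (0:ℝ), F m t
      = (cR m : ℂ) * ((1/((aseq m : ℝ):ℂ))^s * Complex.Gamma s) := by
    intro m
    have h1 : ∀ t : ℝ, F m t
        = (cR m : ℂ) * ((t:ℂ)^(s-1) * Complex.exp (-(((aseq m : ℝ):ℂ) * (t:ℂ)))) := by
      intro t
      rw [hFdef]
      simp only
      push_cast
      ring
    simp only [h1]
    rw [integral_const_mul, Complex.integral_cpow_mul_exp_neg_mul_Ioi hσ0 (ha_pos m)]
  -- conjunct 3
  have conj3 : (∫ t in Set.Ioi (0 : ℝ), (t : ℂ) ^ (s - 1) *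
        ((∫ ξ in {ξ : Fin n → ℚ_[p] | 1 < ‖ξ‖}, Real.exp (-(t * A ξ)) ∂μ : ℝ) : ℂ)) =
      Complex.Gamma s *
        ∑' m : ℕ, (p : ℂ) ^ ((m + 1) * n) * (1 - (p : ℂ) ^ (-(n : ℤ))) *
          (g ((p : ℝ) ^ (m + 1)) : ℂ) ^ (-s) := by
    rw [setIntegral_congr_fun measurableSet_Ioi (fun t ht => hPoint t ht)]
    rw [← integral_tsum_of_summable_integral_norm hFint hFnorm_sum]
    rw [← tsum_mul_left]
    refine tsum_congr fun m => ?_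
    rw [hFval m]
    have harg : ((aseq m : ℝ):ℂ).arg ≠ Real.pi := by
      rw [Complex.arg_ofReal_of_nonneg (ha_pos m).le]
      exact Ne.symm Real.pi_ne_zero
    rw [one_div, Complex.inv_cpow _ _ harg, ← Complex.cpow_neg, hcast m]
    ring
  exact ⟨conj1, conj2, conj3⟩
end
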